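/- arXiv:2211.09709 — 7 statements merged into one kernel-verified Lean document; each statement's English description precedes it below -/
import Mathlib

section
/- For positive reals a₁,…,aₘ (m ≥ 1) and b₁,…,bₙ (n ≥ 1), the hypervolume f satisfies the recurrence f(a₁,…,aₘ; b₁,…,bₙ) = (a₁/(a₁+b₁))·f(a₁,…,aₘ; b₂,…,bₙ) + (b₁/(a₁+b₁))·f(a₂,…,aₘ; b₁,…,bₙ). -/
open MeasureTheory Finset

section aux

open Set

lemma hv_slice_v {B s k : ℝ} (hB : 0 < B) (hs : 0 < s) (hk : 0 ≤ k) :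
    volume {v : ℝ | v ∈ Set.Icc (0:ℝ) 1 ∧ k < v ^ B * s} =
      ENNReal.ofReal (1 - (k / s) ^ B⁻¹) := by
  have hset : {v : ℝ | v ∈ Set.Icc (0:ℝ) 1 ∧ k < v ^ B * s} = Set.Ioc ((k / s) ^ B⁻¹) 1 := by
    ext v
    simp only [Set.mem_setOf_eq, Set.mem_Icc, Set.mem_Ioc]
    constructor
    · rintro ⟨⟨h0, h1⟩, h2⟩
      refine ⟨?_, h1⟩
      rw [Real.rpow_inv_lt_iff_of_pos (div_nonneg hk hs.le) h0 hB]
      rwa [div_lt_iff₀ hs]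
    · rintro ⟨h1, h2⟩
      have h0 : 0 ≤ v := le_trans (Real.rpow_nonneg (div_nonneg hk hs.le) _) h1.le
      refine ⟨⟨h0, h2⟩, ?_⟩
      rw [← div_lt_iff₀ hs]
      rwa [← Real.rpow_inv_lt_iff_of_pos (div_nonneg hk hs.le) h0 hB]
  rw [hset, Real.volume_Ioc]

end aux

lemma integrable_aux {C γ : ℝ} (hγ : 0 < γ) :
    IntegrableOn (fun u : ℝ => 1 - C * u ^ γ) (Set.Icc (0:ℝ) 1) volume := by
  apply Continuous.integrableOn_Icc
  exact continuous_const.sub (continuous_const.mul (Real.continuous_rpow_const hγ.le))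

lemma lem_int_le {C γ : ℝ} (hγ : 0 < γ) (hC0 : 0 ≤ C) (hC : C ≤ 1) :
    ∫⁻ u in Set.Icc (0:ℝ) 1, ENNReal.ofReal (1 - C * u ^ γ) =
      ENNReal.ofReal (1 - C / (γ + 1)) := by
  have hnn : ∀ u ∈ Set.Icc (0:ℝ) 1, 0 ≤ 1 - C * u ^ γ := by
    intro u hu
    have h1 : u ^ γ ≤ 1 := Real.rpow_le_one hu.1 hu.2 hγ.le
    nlinarith [Real.rpow_nonneg hu.1 γ]
  rw [← ofReal_integral_eq_lintegral_ofReal (integrable_aux hγ)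
    ((ae_restrict_iff' measurableSet_Icc).2 (Filter.Eventually.of_forall hnn))]
  congr 1
  rw [MeasureTheory.integral_Icc_eq_integral_Ioc, ← intervalIntegral.integral_of_le zero_le_one]
  rw [intervalIntegral.integral_sub intervalIntegrable_const
    ((intervalIntegral.intervalIntegrable_rpow (Or.inl hγ.le)).const_mul C),
    intervalIntegral.integral_const, intervalIntegral.integral_const_mul,
    integral_rpow (Or.inl (by linarith))]
  rw [Real.one_rpow, Real.zero_rpow (by linarith)]
  simp only [sub_zero, smul_eq_mul, mul_one]
  field_simp


lemma lem_int_gt {C γ : ℝ} (hγ : 0 < γ) (hC : 1 < C) :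
    ∫⁻ u in Set.Icc (0:ℝ) 1, ENNReal.ofReal (1 - C * u ^ γ) =
      ENNReal.ofReal (C⁻¹ ^ γ⁻¹ * (γ / (γ + 1))) := by
  set u₀ : ℝ := C⁻¹ ^ γ⁻¹ with hu₀
  have hCpos : 0 < C := lt_trans one_pos hC
  have hu₀pos : 0 < u₀ := Real.rpow_pos_of_pos (inv_pos.2 hCpos) _
  have hu₀le : u₀ ≤ 1 := Real.rpow_le_one (inv_nonneg.2 hCpos.le) (inv_le_one_of_one_le₀ hC.le) (inv_nonneg.2 hγ.le)
  have hu₀γ : u₀ ^ γ = C⁻¹ := Real.rpow_inv_rpow (inv_nonneg.2 hCpos.le) hγ.ne'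
  have hsplit : Set.Icc (0:ℝ) 1 = Set.Icc 0 u₀ ∪ Set.Ioc u₀ 1 :=
    (Set.Icc_union_Ioc_eq_Icc hu₀pos.le hu₀le).symm
  rw [hsplit, lintegral_union measurableSet_Ioc ((Set.Iic_disjoint_Ioc le_rfl).mono Set.Icc_subset_Iic_self le_rfl)]
  have h2 : ∫⁻ u in Set.Ioc u₀ 1, ENNReal.ofReal (1 - C * u ^ γ) = 0 := by
    have hptw : ∀ u ∈ Set.Ioc u₀ 1, ENNReal.ofReal (1 - C * u ^ γ) = (0:ENNReal) := by
      intro u hu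
      rw [ENNReal.ofReal_eq_zero]
      have h3 : u₀ ^ γ < u ^ γ := Real.rpow_lt_rpow hu₀pos.le hu.1 hγ
      rw [hu₀γ] at h3
      have : 1 < C * u ^ γ := by
        rw [← mul_inv_cancel₀ hCpos.ne']
        exact (mul_lt_mul_iff_right₀ hCpos).2 h3
      linarith
    rw [setLIntegral_congr_fun measurableSet_Ioc hptw]
    simp
  rw [h2, add_zero]
  have hnn : ∀ u ∈ Set.Icc (0:ℝ) u₀, 0 ≤ 1 - C * u ^ γ := by
    intro u hu
    have h1 : u ^ γ ≤ u₀ ^ γ := Real.rpow_le_rpow hu.1 hu.2 hγ.le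
    rw [hu₀γ] at h1
    have : C * u ^ γ ≤ C * C⁻¹ := (mul_le_mul_iff_right₀ hCpos).2 h1
    rw [mul_inv_cancel₀ hCpos.ne'] at this
    linarith
  have hint : IntegrableOn (fun u : ℝ => 1 - C * u ^ γ) (Set.Icc (0:ℝ) u₀) volume :=
    (integrable_aux hγ).mono_set (Set.Icc_subset_Icc le_rfl hu₀le)
  rw [← ofReal_integral_eq_lintegral_ofReal hint
    ((ae_restrict_iff' measurableSet_Icc).2 (Filter.Eventually.of_forall hnn))]
  congr 1
  rw [MeasureTheory.integral_Icc_eq_integral_Ioc, ← intervalIntegral.integral_of_le hu₀pos.le]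
  rw [intervalIntegral.integral_sub intervalIntegrable_const
    ((intervalIntegral.intervalIntegrable_rpow (Or.inl hγ.le)).const_mul C),
    intervalIntegral.integral_const, intervalIntegral.integral_const_mul,
    integral_rpow (Or.inl (by linarith))]
  rw [Real.zero_rpow (by linarith)]
  have hadd : u₀ ^ (γ + 1) = C⁻¹ * u₀ := by
    rw [Real.rpow_add hu₀pos, hu₀γ, Real.rpow_one]
  rw [hadd]
  simp only [sub_zero, smul_eq_mul, mul_one]
  field_simp
  ring
lemma key2d {A B r s : ℝ} (hA : 0 < A) (hB : 0 < B) (hr : 0 ≤ r) (hs : 0 ≤ s) :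
    volume {p : ℝ × ℝ | p.1 ∈ Set.Icc (0:ℝ) 1 ∧ p.2 ∈ Set.Icc (0:ℝ) 1 ∧
        p.1 ^ A * r < p.2 ^ B * s}
      = ENNReal.ofReal (A / (A + B)) * volume {u : ℝ | u ∈ Set.Icc (0:ℝ) 1 ∧ u ^ A * r < s}
        + ENNReal.ofReal (B / (A + B)) * volume {v : ℝ | v ∈ Set.Icc (0:ℝ) 1 ∧ r < v ^ B * s} := by
  have hAB : 0 < A + B := by linarith
  rcases eq_or_lt_of_le hs with hs0 | hspos
  · -- s = 0 : all sets empty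
    have e2 : {p : ℝ × ℝ | p.1 ∈ Set.Icc (0:ℝ) 1 ∧ p.2 ∈ Set.Icc (0:ℝ) 1 ∧
        p.1 ^ A * r < p.2 ^ B * s} = ∅ := by
      ext p; simp only [Set.mem_setOf_eq, Set.mem_empty_iff_false, iff_false, not_and]
      intro h1 h2 h3
      rw [← hs0, mul_zero] at h3
      exact absurd h3 (not_lt.2 (mul_nonneg (Real.rpow_nonneg h1.1 _) hr))
    have e1 : {u : ℝ | u ∈ Set.Icc (0:ℝ) 1 ∧ u ^ A * r < s} = ∅ := by
      ext u; simp only [Set.mem_setOf_eq, Set.mem_empty_iff_false, iff_false, not_and]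
      intro h1
      rw [← hs0]
      exact not_lt.2 (mul_nonneg (Real.rpow_nonneg h1.1 _) hr)
    have e3 : {v : ℝ | v ∈ Set.Icc (0:ℝ) 1 ∧ r < v ^ B * s} = ∅ := by
      ext v; simp only [Set.mem_setOf_eq, Set.mem_empty_iff_false, iff_false, not_and]
      intro h1
      rw [← hs0, mul_zero]
      exact not_lt.2 hr
    rw [e1, e2, e3]; simp
  · -- s > 0
    set C : ℝ := (r / s) ^ B⁻¹ with hC
    have hC0 : 0 ≤ C := Real.rpow_nonneg (div_nonneg hr hspos.le) _
    set γ : ℝ := A / B with hγdef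
    have hγ : 0 < γ := div_pos hA hB
    -- LHS as an integral
    have hLHS : volume {p : ℝ × ℝ | p.1 ∈ Set.Icc (0:ℝ) 1 ∧ p.2 ∈ Set.Icc (0:ℝ) 1 ∧
        p.1 ^ A * r < p.2 ^ B * s} =
        ∫⁻ u in Set.Icc (0:ℝ) 1, ENNReal.ofReal (1 - C * u ^ γ) := by
      have hmeas : MeasurableSet {p : ℝ × ℝ | p.1 ∈ Set.Icc (0:ℝ) 1 ∧ p.2 ∈ Set.Icc (0:ℝ) 1 ∧
          p.1 ^ A * r < p.2 ^ B * s} := by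
        apply MeasurableSet.inter
        · exact (measurableSet_Icc).preimage measurable_fst
        apply MeasurableSet.inter
        · exact (measurableSet_Icc).preimage measurable_snd
        · exact measurableSet_lt
            (((Real.continuous_rpow_const hA.le).measurable.comp measurable_fst).mul_const r)
            (((Real.continuous_rpow_const hB.le).measurable.comp measurable_snd).mul_const s)
      rw [Measure.volume_eq_prod, Measure.prod_apply hmeas]
      have hsl : ∀ u : ℝ, volume (Prod.mk u ⁻¹' {p : ℝ × ℝ | p.1 ∈ Set.Icc (0:ℝ) 1 ∧
          p.2 ∈ Set.Icc (0:ℝ) 1 ∧ p.1 ^ A * r < p.2 ^ B * s}) =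
          Set.indicator (Set.Icc (0:ℝ) 1) (fun u => ENNReal.ofReal (1 - C * u ^ γ)) u := by
        intro u
        by_cases hu : u ∈ Set.Icc (0:ℝ) 1
        · rw [Set.indicator_of_mem hu]
          have : Prod.mk u ⁻¹' {p : ℝ × ℝ | p.1 ∈ Set.Icc (0:ℝ) 1 ∧
              p.2 ∈ Set.Icc (0:ℝ) 1 ∧ p.1 ^ A * r < p.2 ^ B * s} =
              {v : ℝ | v ∈ Set.Icc (0:ℝ) 1 ∧ (u ^ A * r) < v ^ B * s} := by
            ext v; simp only [Set.mem_preimage, Set.mem_setOf_eq]; tauto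
          rw [this, hv_slice_v hB hspos (mul_nonneg (Real.rpow_nonneg hu.1 _) hr)]
          congr 2
          rw [mul_div_assoc, Real.mul_rpow (Real.rpow_nonneg hu.1 _) (div_nonneg hr hspos.le),
            ← Real.rpow_mul hu.1, hC, hγdef, div_eq_mul_inv]
          ring
        · rw [Set.indicator_of_notMem hu]
          have : Prod.mk u ⁻¹' {p : ℝ × ℝ | p.1 ∈ Set.Icc (0:ℝ) 1 ∧
              p.2 ∈ Set.Icc (0:ℝ) 1 ∧ p.1 ^ A * r < p.2 ^ B * s} = ∅ := by
            ext v; simp only [Set.mem_preimage, Set.mem_setOf_eq, Set.mem_empty_iff_false,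
              iff_false, not_and]
            intro h; exact absurd h hu
          rw [this, measure_empty]
      simp_rw [hsl]
      rw [lintegral_indicator measurableSet_Icc]
    rw [hLHS, hv_slice_v hB hspos hr]
    rcases le_or_gt r s with hrs | hsr
    · -- r ≤ s : C ≤ 1
      have hCle : C ≤ 1 := Real.rpow_le_one (div_nonneg hr hspos.le)
        ((div_le_one hspos).2 hrs) (inv_nonneg.2 hB.le)
      rw [lem_int_le hγ hC0 hCle]
      -- vol1 = 1
      have hvol1 : volume {u : ℝ | u ∈ Set.Icc (0:ℝ) 1 ∧ u ^ A * r < s} = 1 := by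
        have hsub1 : {u : ℝ | u ∈ Set.Icc (0:ℝ) 1 ∧ u ^ A * r < s} ⊆ Set.Icc (0:ℝ) 1 :=
          fun u hu => hu.1
        have hsub2 : Set.Ico (0:ℝ) 1 ⊆ {u : ℝ | u ∈ Set.Icc (0:ℝ) 1 ∧ u ^ A * r < s} := by
          intro u hu
          refine ⟨⟨hu.1, hu.2.le⟩, ?_⟩
          have h1 : u ^ A < 1 := Real.rpow_lt_one hu.1 hu.2 hA
          have h2 : u ^ A * r ≤ u ^ A * s := mul_le_mul_of_nonneg_left hrs (Real.rpow_nonneg hu.1 _)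
          have h3 : u ^ A * s < 1 * s := mul_lt_mul_of_pos_right h1 hspos
          rw [one_mul] at h3
          linarith
        refine le_antisymm ?_ ?_
        · calc volume {u : ℝ | u ∈ Set.Icc (0:ℝ) 1 ∧ u ^ A * r < s} ≤ volume (Set.Icc (0:ℝ) 1) :=
            measure_mono hsub1
          _ = 1 := by rw [Real.volume_Icc]; norm_num
        · calc (1:ENNReal) = volume (Set.Ico (0:ℝ) 1) := by rw [Real.volume_Ico]; norm_num
          _ ≤ _ := measure_mono hsub2
      rw [hvol1, mul_one]
      rw [← ENNReal.ofReal_mul (by positivity), ← ENNReal.ofReal_add (by positivity)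
        (mul_nonneg (by positivity) (by linarith))]
      congr 1
      rw [hγdef, hC, div_eq_mul_inv]
      field_simp
      ring
    · -- s < r : C > 1
      have hrpos : 0 < r := lt_of_le_of_lt hs hsr
      have hC1 : 1 < C := by
        have h1 : (1:ℝ) < r / s := (one_lt_div hspos).2 hsr
        calc (1:ℝ) = 1 ^ B⁻¹ := (Real.one_rpow _).symm
        _ < (r / s) ^ B⁻¹ := Real.rpow_lt_rpow (by norm_num) h1 (inv_pos.2 hB)
      rw [lem_int_gt hγ hC1]
      -- vol2 = 0
      have hvol2 : ENNReal.ofReal (1 - (r / s) ^ B⁻¹) = 0 := by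
        rw [ENNReal.ofReal_eq_zero]
        rw [hC] at hC1
        linarith
      rw [hvol2, mul_zero, add_zero]
      -- vol1 = ofReal ((s/r)^A⁻¹)
      have hc1 : (s / r) ^ A⁻¹ ≤ 1 := Real.rpow_le_one (div_nonneg hs hrpos.le)
        ((div_le_one hrpos).2 hsr.le) (inv_nonneg.2 hA.le)
      have hvol1 : volume {u : ℝ | u ∈ Set.Icc (0:ℝ) 1 ∧ u ^ A * r < s} =
          ENNReal.ofReal ((s / r) ^ A⁻¹) := by
        have hset : {u : ℝ | u ∈ Set.Icc (0:ℝ) 1 ∧ u ^ A * r < s} =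
            Set.Ico (0:ℝ) ((s / r) ^ A⁻¹) := by
          ext u
          simp only [Set.mem_setOf_eq, Set.mem_Icc, Set.mem_Ico]
          constructor
          · rintro ⟨⟨h0, h1⟩, h2⟩
            refine ⟨h0, ?_⟩
            rw [Real.lt_rpow_inv_iff_of_pos h0 (div_nonneg hs hrpos.le) hA]
            rwa [lt_div_iff₀ hrpos]
          · rintro ⟨h0, h1⟩
            have h2 : u ≤ 1 := le_trans h1.le hc1
            refine ⟨⟨h0, h2⟩, ?_⟩
            rw [← lt_div_iff₀ hrpos]
            rwa [← Real.lt_rpow_inv_iff_of_pos h0 (div_nonneg hs hrpos.le) hA]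
        rw [hset, Real.volume_Ico, sub_zero]
      rw [hvol1]
      rw [← ENNReal.ofReal_mul (by positivity)]
      congr 1
      have hCinv : C⁻¹ = (s / r) ^ B⁻¹ := by
        rw [hC, ← Real.rpow_neg_one ((r/s) ^ B⁻¹)]
        rw [← Real.rpow_mul (div_nonneg hr hspos.le)]
        rw [show B⁻¹ * (-1) = -B⁻¹ by ring, Real.rpow_neg (div_nonneg hr hspos.le),
          ← Real.inv_rpow (div_nonneg hr hspos.le), inv_div]
      have hpow : C⁻¹ ^ γ⁻¹ = (s / r) ^ A⁻¹ := by
        rw [hCinv, ← Real.rpow_mul (div_nonneg hs hrpos.le)]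
        congr 1
        rw [hγdef]
        field_simp
      rw [hpow, hγdef]
      have : A / B / (A / B + 1) = A / (A + B) := by
        field_simp
      rw [this, mul_comm]

section plumbing

variable {α β γ δ : Type*} [MeasureSpace α] [MeasureSpace β] [MeasureSpace γ] [MeasureSpace δ]
  [SigmaFinite (volume : Measure α)] [SigmaFinite (volume : Measure β)]
  [SigmaFinite (volume : Measure γ)] [SigmaFinite (volume : Measure δ)]

lemma mp_leftcomm : MeasurePreserving
    (fun q : β × (γ × δ) => (q.2.1, (q.1, q.2.2))) (volume : Measure (β × γ × δ)) volume := by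
  have h1 : MeasurePreserving (MeasurableEquiv.prodAssoc.symm :
      β × γ × δ ≃ᵐ (β × γ) × δ) volume volume :=
    volume_preserving_prodAssoc.symm MeasurableEquiv.prodAssoc
  have h2 : MeasurePreserving (Prod.map (Prod.swap : β × γ → γ × β) (id : δ → δ))
      volume volume := Measure.measurePreserving_swap.prod (MeasurePreserving.id _)
  have h3 : MeasurePreserving (MeasurableEquiv.prodAssoc : (γ × β) × δ ≃ᵐ γ × β × δ)
      volume volume := volume_preserving_prodAssoc
  exact (h3.comp (h2.comp h1) : _)

lemma mp_pppc : MeasurePreserving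
    (fun p : (α × β) × (γ × δ) => ((p.1.1, p.2.1), (p.1.2, p.2.2)))
    (volume : Measure ((α × β) × (γ × δ))) volume := by
  have h1 : MeasurePreserving (MeasurableEquiv.prodAssoc : (α × β) × (γ × δ) ≃ᵐ α × β × γ × δ)
      volume volume := volume_preserving_prodAssoc
  have h2 : MeasurePreserving (Prod.map (id : α → α)
      (fun q : β × (γ × δ) => (q.2.1, (q.1, q.2.2)))) volume volume :=
    (MeasurePreserving.id _).prod mp_leftcomm
  have h3 : MeasurePreserving (MeasurableEquiv.prodAssoc.symm :
      α × γ × β × δ ≃ᵐ (α × γ) × (β × δ)) volume volume :=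
    volume_preserving_prodAssoc.symm MeasurableEquiv.prodAssoc
  exact (h3.comp (h2.comp h1) : _)

end plumbing

lemma mp_cons (k : ℕ) : MeasurePreserving
    (fun p : ℝ × (Fin k → ℝ) => (Fin.cons p.1 p.2 : Fin (k+1) → ℝ))
    (volume : Measure (ℝ × (Fin k → ℝ))) (volume : Measure (Fin (k+1) → ℝ)) := by
  have h : MeasurePreserving (⇑(MeasurableEquiv.piFinSuccAbove (fun _ : Fin (k+1) => ℝ) 0).symm)
      volume volume :=
    (volume_preserving_piFinSuccAbove (fun _ : Fin (k+1) => ℝ) 0).symm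
      (MeasurableEquiv.piFinSuccAbove (fun _ : Fin (k+1) => ℝ) 0)
  have heq : ⇑(MeasurableEquiv.piFinSuccAbove (fun _ : Fin (k+1) => ℝ) 0).symm =
      fun p : ℝ × (Fin k → ℝ) => Fin.cons p.1 p.2 := by
    funext p
    simp [MeasurableEquiv.piFinSuccAbove]
    rfl
  rwa [heq] at h

lemma hv_measS {m n : ℕ} (a : Fin m → ℝ) (b : Fin n → ℝ)
    (ha : ∀ i, 0 < a i) (hb : ∀ j, 0 < b j) :
    MeasurableSet {z : (Fin m → ℝ) × (Fin n → ℝ) |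
      (∀ i, z.1 i ∈ Set.Icc (0 : ℝ) 1) ∧ (∀ j, z.2 j ∈ Set.Icc (0 : ℝ) 1) ∧
      ∏ i, (z.1 i) ^ (a i) < ∏ j, (z.2 j) ^ (b j)} := by
  apply MeasurableSet.inter
  · show MeasurableSet {z : (Fin m → ℝ) × (Fin n → ℝ) | ∀ i, z.1 i ∈ Set.Icc (0:ℝ) 1}
    rw [Set.setOf_forall]
    exact MeasurableSet.iInter fun i =>
      measurableSet_Icc.preimage (measurable_fst.eval)
  apply MeasurableSet.inter
  · show MeasurableSet {z : (Fin m → ℝ) × (Fin n → ℝ) | ∀ j, z.2 j ∈ Set.Icc (0:ℝ) 1}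
    rw [Set.setOf_forall]
    exact MeasurableSet.iInter fun j =>
      measurableSet_Icc.preimage (measurable_snd.eval)
  · exact measurableSet_lt
      (Finset.measurable_prod _ fun i _ =>
        (Real.continuous_rpow_const (ha i).le).measurable.comp
          (measurable_fst.eval))
      (Finset.measurable_prod _ fun j _ =>
        (Real.continuous_rpow_const (hb j).le).measurable.comp
          (measurable_snd.eval))

lemma hv_cons_prod {k : ℕ} (u : ℝ) (x : Fin k → ℝ) (c : Fin (k+1) → ℝ) :
    ∏ i, (Fin.cons u x : Fin (k+1) → ℝ) i ^ c i = u ^ c 0 * ∏ i, x i ^ Fin.tail c i := by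
  rw [Fin.prod_univ_succ]
  simp [Fin.tail]

lemma hv_cons_icc {k : ℕ} (u : ℝ) (x : Fin k → ℝ) :
    (∀ i, (Fin.cons u x : Fin (k+1) → ℝ) i ∈ Set.Icc (0:ℝ) 1) ↔
      u ∈ Set.Icc (0:ℝ) 1 ∧ ∀ i, x i ∈ Set.Icc (0:ℝ) 1 := by
  rw [Fin.forall_fin_succ]
  simp

lemma hv_vol_ne_top {m n : ℕ} (a : Fin m → ℝ) (b : Fin n → ℝ) :
    volume {z : (Fin m → ℝ) × (Fin n → ℝ) |
      (∀ i, z.1 i ∈ Set.Icc (0 : ℝ) 1) ∧ (∀ j, z.2 j ∈ Set.Icc (0 : ℝ) 1) ∧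
      ∏ i, (z.1 i) ^ (a i) < ∏ j, (z.2 j) ^ (b j)} ≠ ⊤ := by
  have hsub : {z : (Fin m → ℝ) × (Fin n → ℝ) |
      (∀ i, z.1 i ∈ Set.Icc (0 : ℝ) 1) ∧ (∀ j, z.2 j ∈ Set.Icc (0 : ℝ) 1) ∧
      ∏ i, (z.1 i) ^ (a i) < ∏ j, (z.2 j) ^ (b j)} ⊆
      (Set.univ.pi fun _ => Set.Icc (0:ℝ) 1) ×ˢ (Set.univ.pi fun _ => Set.Icc (0:ℝ) 1) := by
    rintro z ⟨h1, h2, _⟩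
    exact ⟨fun i _ => h1 i, fun j _ => h2 j⟩
  refine ne_top_of_le_ne_top ?_ (measure_mono hsub)
  rw [Measure.volume_eq_prod, Measure.prod_prod, volume_pi_pi, volume_pi_pi]
  simp [Real.volume_Icc]

lemma hv_vol_prod_apply {α β : Type*} [MeasureSpace α] [MeasureSpace β]
    [SigmaFinite (volume : Measure β)] {s : Set (α × β)} (hs : MeasurableSet s) :
    volume s = ∫⁻ x, volume (Prod.mk x ⁻¹' s) := by
  rw [Measure.volume_eq_prod, Measure.prod_apply hs]

lemma hv_vol_rec (m n : ℕ) (a : Fin (m + 1) → ℝ) (b : Fin (n + 1) → ℝ)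
    (ha : ∀ i, 0 < a i) (hb : ∀ j, 0 < b j) :
    volume {z : (Fin (m+1) → ℝ) × (Fin (n+1) → ℝ) |
        (∀ i, z.1 i ∈ Set.Icc (0 : ℝ) 1) ∧ (∀ j, z.2 j ∈ Set.Icc (0 : ℝ) 1) ∧
        ∏ i, (z.1 i) ^ (a i) < ∏ j, (z.2 j) ^ (b j)}
      = ENNReal.ofReal (a 0 / (a 0 + b 0)) *
          volume {z : (Fin (m+1) → ℝ) × (Fin n → ℝ) |
            (∀ i, z.1 i ∈ Set.Icc (0 : ℝ) 1) ∧ (∀ j, z.2 j ∈ Set.Icc (0 : ℝ) 1) ∧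
            ∏ i, (z.1 i) ^ (a i) < ∏ j, (z.2 j) ^ (Fin.tail b j)}
        + ENNReal.ofReal (b 0 / (a 0 + b 0)) *
          volume {z : (Fin m → ℝ) × (Fin (n+1) → ℝ) |
            (∀ i, z.1 i ∈ Set.Icc (0 : ℝ) 1) ∧ (∀ j, z.2 j ∈ Set.Icc (0 : ℝ) 1) ∧
            ∏ i, (z.1 i) ^ (Fin.tail a i) < ∏ j, (z.2 j) ^ (b j)} := by
  have hS := hv_measS a b ha hb
  have hT1 := hv_measS a (Fin.tail b) ha (fun j => hb j.succ)
  have hT2 := hv_measS (Fin.tail a) b (fun i => ha i.succ) hb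
  have mpψ : MeasurePreserving
      (fun q : ((Fin m → ℝ) × (Fin n → ℝ)) × (ℝ × ℝ) =>
        ((Fin.cons q.2.1 q.1.1 : Fin (m+1) → ℝ), (Fin.cons q.2.2 q.1.2 : Fin (n+1) → ℝ)))
      volume volume :=
    ((mp_cons m).prod (mp_cons n)).comp
      ((Measure.measurePreserving_swap.prod Measure.measurePreserving_swap).comp mp_pppc)
  have mpψ1 : MeasurePreserving
      (fun q : ((Fin m → ℝ) × (Fin n → ℝ)) × ℝ =>
        ((Fin.cons q.2 q.1.1 : Fin (m+1) → ℝ), q.1.2)) volume volume :=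
    ((mp_cons m).prod (MeasurePreserving.id _)).comp
      ((volume_preserving_prodAssoc.symm MeasurableEquiv.prodAssoc).comp
        Measure.measurePreserving_swap)
  have mpψ2 : MeasurePreserving
      (fun q : ((Fin m → ℝ) × (Fin n → ℝ)) × ℝ =>
        (q.1.1, (Fin.cons q.2 q.1.2 : Fin (n+1) → ℝ))) volume volume :=
    ((MeasurePreserving.id _).prod (mp_cons n)).comp
      (((MeasurePreserving.id _).prod Measure.measurePreserving_swap).comp
        volume_preserving_prodAssoc)
  rw [← mpψ.measure_preimage hS.nullMeasurableSet,
      ← mpψ1.measure_preimage hT1.nullMeasurableSet,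
      ← mpψ2.measure_preimage hT2.nullMeasurableSet,
      hv_vol_prod_apply (mpψ.measurable hS),
      hv_vol_prod_apply (mpψ1.measurable hT1),
      hv_vol_prod_apply (mpψ2.measurable hT2),
      ← lintegral_const_mul _ (measurable_measure_prodMk_left (mpψ1.measurable hT1)),
      ← lintegral_const_mul _ (measurable_measure_prodMk_left (mpψ2.measurable hT2)),
      ← lintegral_add_left ((measurable_measure_prodMk_left
          (mpψ1.measurable hT1)).const_mul _)]
  refine lintegral_congr fun z => ?_
  by_cases hz : (∀ i, z.1 i ∈ Set.Icc (0:ℝ) 1) ∧ (∀ j, z.2 j ∈ Set.Icc (0:ℝ) 1)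
  · have hR0 : 0 ≤ ∏ i, z.1 i ^ Fin.tail a i :=
      Finset.prod_nonneg fun i _ => Real.rpow_nonneg (hz.1 i).1 _
    have hS0 : 0 ≤ ∏ j, z.2 j ^ Fin.tail b j :=
      Finset.prod_nonneg fun j _ => Real.rpow_nonneg (hz.2 j).1 _
    have e0 : Prod.mk z ⁻¹' ((fun q : ((Fin m → ℝ) × (Fin n → ℝ)) × (ℝ × ℝ) =>
        ((Fin.cons q.2.1 q.1.1 : Fin (m+1) → ℝ), (Fin.cons q.2.2 q.1.2 : Fin (n+1) → ℝ))) ⁻¹'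
        {z : (Fin (m+1) → ℝ) × (Fin (n+1) → ℝ) |
          (∀ i, z.1 i ∈ Set.Icc (0 : ℝ) 1) ∧ (∀ j, z.2 j ∈ Set.Icc (0 : ℝ) 1) ∧
          ∏ i, (z.1 i) ^ (a i) < ∏ j, (z.2 j) ^ (b j)}) =
        {p : ℝ × ℝ | p.1 ∈ Set.Icc (0:ℝ) 1 ∧ p.2 ∈ Set.Icc (0:ℝ) 1 ∧
          p.1 ^ (a 0) * (∏ i, z.1 i ^ Fin.tail a i) <
          p.2 ^ (b 0) * (∏ j, z.2 j ^ Fin.tail b j)} := by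
      ext p
      simp only [Set.mem_preimage, Set.mem_setOf_eq]
      rw [hv_cons_icc, hv_cons_icc, hv_cons_prod, hv_cons_prod]
      exact ⟨fun ⟨⟨h1, _⟩, ⟨h2, _⟩, h3⟩ => ⟨h1, h2, h3⟩,
        fun ⟨h1, h2, h3⟩ => ⟨⟨h1, hz.1⟩, ⟨h2, hz.2⟩, h3⟩⟩
    have e1 : Prod.mk z ⁻¹' ((fun q : ((Fin m → ℝ) × (Fin n → ℝ)) × ℝ =>
        ((Fin.cons q.2 q.1.1 : Fin (m+1) → ℝ), q.1.2)) ⁻¹'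
        {z : (Fin (m+1) → ℝ) × (Fin n → ℝ) |
          (∀ i, z.1 i ∈ Set.Icc (0 : ℝ) 1) ∧ (∀ j, z.2 j ∈ Set.Icc (0 : ℝ) 1) ∧
          ∏ i, (z.1 i) ^ (a i) < ∏ j, (z.2 j) ^ (Fin.tail b j)}) =
        {u : ℝ | u ∈ Set.Icc (0:ℝ) 1 ∧
          u ^ (a 0) * (∏ i, z.1 i ^ Fin.tail a i) < ∏ j, z.2 j ^ Fin.tail b j} := by
      ext u
      simp only [Set.mem_preimage, Set.mem_setOf_eq]
      rw [hv_cons_icc, hv_cons_prod]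
      exact ⟨fun ⟨⟨h1, _⟩, _, h3⟩ => ⟨h1, h3⟩,
        fun ⟨h1, h3⟩ => ⟨⟨h1, hz.1⟩, hz.2, h3⟩⟩
    have e2 : Prod.mk z ⁻¹' ((fun q : ((Fin m → ℝ) × (Fin n → ℝ)) × ℝ =>
        (q.1.1, (Fin.cons q.2 q.1.2 : Fin (n+1) → ℝ))) ⁻¹'
        {z : (Fin m → ℝ) × (Fin (n+1) → ℝ) |
          (∀ i, z.1 i ∈ Set.Icc (0 : ℝ) 1) ∧ (∀ j, z.2 j ∈ Set.Icc (0 : ℝ) 1) ∧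
          ∏ i, (z.1 i) ^ (Fin.tail a i) < ∏ j, (z.2 j) ^ (b j)}) =
        {v : ℝ | v ∈ Set.Icc (0:ℝ) 1 ∧
          (∏ i, z.1 i ^ Fin.tail a i) < v ^ (b 0) * (∏ j, z.2 j ^ Fin.tail b j)} := by
      ext v
      simp only [Set.mem_preimage, Set.mem_setOf_eq]
      rw [hv_cons_icc, hv_cons_prod]
      exact ⟨fun ⟨_, ⟨h2, _⟩, h3⟩ => ⟨h2, h3⟩,
        fun ⟨h2, h3⟩ => ⟨hz.1, ⟨h2, hz.2⟩, h3⟩⟩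
    rw [e0, e1, e2]
    exact key2d (ha 0) (hb 0) hR0 hS0
  · have e0 : Prod.mk z ⁻¹' ((fun q : ((Fin m → ℝ) × (Fin n → ℝ)) × (ℝ × ℝ) =>
        ((Fin.cons q.2.1 q.1.1 : Fin (m+1) → ℝ), (Fin.cons q.2.2 q.1.2 : Fin (n+1) → ℝ))) ⁻¹'
        {z : (Fin (m+1) → ℝ) × (Fin (n+1) → ℝ) |
          (∀ i, z.1 i ∈ Set.Icc (0 : ℝ) 1) ∧ (∀ j, z.2 j ∈ Set.Icc (0 : ℝ) 1) ∧
          ∏ i, (z.1 i) ^ (a i) < ∏ j, (z.2 j) ^ (b j)}) = ∅ := by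
      rw [Set.eq_empty_iff_forall_notMem]
      rintro p ⟨h1, h2, _⟩
      exact hz ⟨((hv_cons_icc _ _).1 h1).2, ((hv_cons_icc _ _).1 h2).2⟩
    have e1 : Prod.mk z ⁻¹' ((fun q : ((Fin m → ℝ) × (Fin n → ℝ)) × ℝ =>
        ((Fin.cons q.2 q.1.1 : Fin (m+1) → ℝ), q.1.2)) ⁻¹'
        {z : (Fin (m+1) → ℝ) × (Fin n → ℝ) |
          (∀ i, z.1 i ∈ Set.Icc (0 : ℝ) 1) ∧ (∀ j, z.2 j ∈ Set.Icc (0 : ℝ) 1) ∧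
          ∏ i, (z.1 i) ^ (a i) < ∏ j, (z.2 j) ^ (Fin.tail b j)}) = ∅ := by
      rw [Set.eq_empty_iff_forall_notMem]
      rintro u ⟨h1, h2, _⟩
      exact hz ⟨((hv_cons_icc _ _).1 h1).2, h2⟩
    have e2 : Prod.mk z ⁻¹' ((fun q : ((Fin m → ℝ) × (Fin n → ℝ)) × ℝ =>
        (q.1.1, (Fin.cons q.2 q.1.2 : Fin (n+1) → ℝ))) ⁻¹'
        {z : (Fin m → ℝ) × (Fin (n+1) → ℝ) |
          (∀ i, z.1 i ∈ Set.Icc (0 : ℝ) 1) ∧ (∀ j, z.2 j ∈ Set.Icc (0 : ℝ) 1) ∧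
          ∏ i, (z.1 i) ^ (Fin.tail a i) < ∏ j, (z.2 j) ^ (b j)}) = ∅ := by
      rw [Set.eq_empty_iff_forall_notMem]
      rintro v ⟨h1, h2, _⟩
      exact hz ⟨h1, ((hv_cons_icc _ _).1 h2).2⟩
    rw [e0, e1, e2]
    simp

/-- The hypervolume `f(a₁,…,aₘ; b₁,…,bₙ)`: the Lebesgue measure of the subset of the
unit hypercube `[0,1]ᵐ × [0,1]ⁿ` where `x₁^{a₁}⋯xₘ^{aₘ} < y₁^{b₁}⋯yₙ^{bₙ}`. -/
noncomputable def hypervolume (m n : ℕ) (a : Fin m → ℝ) (b : Fin n → ℝ) : ℝ :=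
  (volume {z : (Fin m → ℝ) × (Fin n → ℝ) |
    (∀ i, z.1 i ∈ Set.Icc (0 : ℝ) 1) ∧ (∀ j, z.2 j ∈ Set.Icc (0 : ℝ) 1) ∧
    ∏ i, (z.1 i) ^ (a i) < ∏ j, (z.2 j) ^ (b j)}).toReal

/-- the hypervolume satisfies the recurrence
`f(a₁,…,aₘ; b₁,…,bₙ) = (a₁/(a₁+b₁))·f(a₁,…,aₘ; b₂,…,bₙ) + (b₁/(a₁+b₁))·f(a₂,…,aₘ; b₁,…,bₙ)`. -/
theorem stmt1 (m n : ℕ) (a : Fin (m + 1) → ℝ) (b : Fin (n + 1) → ℝ)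
    (ha : ∀ i, 0 < a i) (hb : ∀ j, 0 < b j) :
    hypervolume (m + 1) (n + 1) a b
      = a 0 / (a 0 + b 0) * hypervolume (m + 1) n a (Fin.tail b)
        + b 0 / (a 0 + b 0) * hypervolume m (n + 1) (Fin.tail a) b := by
  have hAB : 0 < a 0 + b 0 := add_pos (ha 0) (hb 0)
  unfold hypervolume
  rw [hv_vol_rec m n a b ha hb,
    ENNReal.toReal_add (ENNReal.mul_ne_top ENNReal.ofReal_ne_top (hv_vol_ne_top _ _))
      (ENNReal.mul_ne_top ENNReal.ofReal_ne_top (hv_vol_ne_top _ _)),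
    ENNReal.toReal_mul, ENNReal.toReal_mul,
    ENNReal.toReal_ofReal (div_nonneg (ha 0).le hAB.le),
    ENNReal.toReal_ofReal (div_nonneg (hb 0).le hAB.le)]
end

section
/- For a positive real a₁ and positive reals b₁,…,bₙ, the hypervolume f satisfies f(a₁; b₁,…,bₙ) = a₁ⁿ / ((a₁+b₁)(a₁+b₂)⋯(a₁+bₙ)). -/
open MeasureTheory Finset

/-- `f(a₁; b₁,…,bₙ) = a₁ⁿ / ((a₁+b₁)(a₁+b₂)⋯(a₁+bₙ))`. -/
theorem stmt2 (n : ℕ) (a₁ : ℝ) (b : Fin n → ℝ) (ha : 0 < a₁) (hb : ∀ j, 0 < b j) :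
    hypervolume 1 n (fun _ => a₁) b = a₁ ^ n / ∏ j, (a₁ + b j) := by
  have hmeas : ∀ c : ℝ, 0 ≤ c → Measurable (fun t : ℝ => t ^ c) :=
    fun c hc => (Real.continuous_rpow_const hc).measurable
  set c : Fin n → ℝ := fun j => b j / a₁ with hcdef
  have hc : ∀ j, 0 < c j := fun j => div_pos (hb j) ha
  set h : Fin n → ℝ → ℝ :=
    fun j => Set.indicator (Set.Icc (0:ℝ) 1) (fun t => t ^ (c j)) with hhdef
  set S : Set ((Fin 1 → ℝ) × (Fin n → ℝ)) :=
    {z : (Fin 1 → ℝ) × (Fin n → ℝ) |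
      (∀ i, z.1 i ∈ Set.Icc (0 : ℝ) 1) ∧ (∀ j, z.2 j ∈ Set.Icc (0 : ℝ) 1) ∧
      ∏ i, (z.1 i) ^ ((fun _ => a₁) i) < ∏ j, (z.2 j) ^ (b j)} with hSdef
  have hS : MeasurableSet S := by
    rw [hSdef]
    simp only [Set.setOf_and, Set.setOf_forall]
    refine MeasurableSet.inter ?_ (MeasurableSet.inter ?_ ?_)
    · exact MeasurableSet.iInter fun i =>
        ((measurable_pi_apply i).comp measurable_fst) measurableSet_Icc
    · exact MeasurableSet.iInter fun j =>
        ((measurable_pi_apply j).comp measurable_snd) measurableSet_Icc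
    · exact measurableSet_lt
        (Finset.measurable_prod _ fun i _ =>
          (hmeas a₁ ha.le).comp ((measurable_pi_apply i).comp measurable_fst))
        (Finset.measurable_prod _ fun j _ =>
          (hmeas (b j) (hb j).le).comp ((measurable_pi_apply j).comp measurable_snd))
  -- the key sectionwise computation
  have key : ∀ y : Fin n → ℝ,
      volume ((fun x : Fin 1 → ℝ => (x, y)) ⁻¹' S) = ENNReal.ofReal (∏ j, h j (y j)) := by
    intro y
    by_cases hbox : ∀ j, y j ∈ Set.Icc (0:ℝ) 1
    · -- y is in the box
      set P : ℝ := ∏ j, (y j) ^ (b j) with hPdef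
      set T : Set ℝ := {t : ℝ | t ∈ Set.Icc (0:ℝ) 1 ∧ t ^ a₁ < P} with hTdef
      have hT : MeasurableSet T :=
        measurableSet_Icc.inter (measurableSet_lt (hmeas a₁ ha.le) measurable_const)
      have hsec : (fun x : Fin 1 → ℝ => (x, y)) ⁻¹' S
          = (MeasurableEquiv.funUnique (Fin 1) ℝ) ⁻¹' T := by
        have hdef0 : (default : Fin 1) = 0 := rfl
        ext x
        simp only [hSdef, hTdef, Set.mem_preimage, Set.mem_setOf_eq,
          MeasurableEquiv.funUnique_apply, Fin.prod_univ_one, hdef0]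
        constructor
        · rintro ⟨h1, _, h2⟩; exact ⟨h1 0, h2⟩
        · rintro ⟨h1, h2⟩
          exact ⟨fun i => by rw [Subsingleton.elim i 0]; exact h1, hbox, h2⟩
      rw [hsec, show volume ((MeasurableEquiv.funUnique (Fin 1) ℝ) ⁻¹' T) = volume T from
        (volume_preserving_funUnique (Fin 1) ℝ).measure_preimage
        hT.nullMeasurableSet]
      have hind : ∀ j, h j (y j) = (y j) ^ (c j) :=
        fun j => Set.indicator_of_mem (hbox j) _
      by_cases h0 : ∃ j, y j = 0
      · obtain ⟨j₀, hj₀⟩ := h0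
        have hP : P = 0 := Finset.prod_eq_zero (mem_univ j₀)
          (by rw [hj₀, Real.zero_rpow (hb j₀).ne'])
        have hTe : T = ∅ := by
          rw [Set.eq_empty_iff_forall_notMem]
          rintro t ⟨⟨ht0, _⟩, hlt⟩
          rw [hP] at hlt
          exact absurd hlt (not_lt.mpr (Real.rpow_nonneg ht0 a₁))
        have hprod : (∏ j, h j (y j)) = 0 := by
          refine Finset.prod_eq_zero (mem_univ j₀) ?_
          rw [hind j₀, hj₀, Real.zero_rpow (hc j₀).ne']
        rw [hTe, hprod, measure_empty, ENNReal.ofReal_zero]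
      · push_neg at h0
        have hpos : ∀ j, 0 < y j := fun j => lt_of_le_of_ne (hbox j).1 (Ne.symm (h0 j))
        have hP0 : 0 < P := Finset.prod_pos fun j _ => Real.rpow_pos_of_pos (hpos j) _
        have hP1 : P ≤ 1 := Finset.prod_le_one
          (fun j _ => (Real.rpow_pos_of_pos (hpos j) _).le)
          (fun j _ => Real.rpow_le_one (hbox j).1 (hbox j).2 (hb j).le)
        have hTeq : T = Set.Ico 0 (P ^ a₁⁻¹) := by
          ext t
          simp only [hTdef, Set.mem_setOf_eq, Set.mem_Icc, Set.mem_Ico]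
          constructor
          · rintro ⟨⟨ht0, ht1⟩, hlt⟩
            refine ⟨ht0, ?_⟩
            by_contra hge
            push_neg at hge
            refine absurd hlt (not_lt.mpr ?_)
            calc P = (P ^ a₁⁻¹) ^ a₁ := (Real.rpow_inv_rpow hP0.le ha.ne').symm
              _ ≤ t ^ a₁ := Real.rpow_le_rpow (Real.rpow_nonneg hP0.le _) hge ha.le
          · rintro ⟨ht0, htP⟩
            have hPa1 : P ^ a₁⁻¹ ≤ 1 := Real.rpow_le_one hP0.le hP1 (inv_nonneg.mpr ha.le)
            refine ⟨⟨ht0, htP.le.trans hPa1⟩, ?_⟩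
            calc t ^ a₁ < (P ^ a₁⁻¹) ^ a₁ := Real.rpow_lt_rpow ht0 htP ha
              _ = P := Real.rpow_inv_rpow hP0.le ha.ne'
        rw [hTeq, Real.volume_Ico, sub_zero]
        congr 1
        calc P ^ a₁⁻¹ = ∏ j, (y j ^ b j) ^ a₁⁻¹ :=
              (Real.finset_prod_rpow _ _ (fun j _ => Real.rpow_nonneg (hpos j).le _) _).symm
          _ = ∏ j, h j (y j) := Finset.prod_congr rfl fun j _ => by
              rw [hind j]
              show (y j ^ b j) ^ a₁⁻¹ = y j ^ (b j / a₁)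
              rw [div_eq_mul_inv, Real.rpow_mul (hpos j).le]
    · -- y is outside the box
      have hsec : (fun x : Fin 1 → ℝ => (x, y)) ⁻¹' S = ∅ := by
        rw [Set.eq_empty_iff_forall_notMem]
        rintro x ⟨_, h2, _⟩
        exact hbox h2
      obtain ⟨j₀, hj₀⟩ := not_forall.mp hbox
      have hprod : (∏ j, h j (y j)) = 0 :=
        Finset.prod_eq_zero (mem_univ j₀) (Set.indicator_of_notMem hj₀ _)
      rw [hsec, hprod, measure_empty, ENNReal.ofReal_zero]
  -- measurability and nonnegativity of g
  have hg_nonneg : ∀ y : Fin n → ℝ, 0 ≤ ∏ j, h j (y j) :=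
    fun y => Finset.prod_nonneg fun j _ =>
      Set.indicator_nonneg (fun t ht => Real.rpow_nonneg ht.1 _) _
  have hg_meas : Measurable (fun y : Fin n → ℝ => ∏ j, h j (y j)) :=
    Finset.measurable_prod _ fun j _ =>
      (((hmeas (c j) (hc j).le)).indicator measurableSet_Icc).comp (measurable_pi_apply j)
  -- Fubini
  have hvol : volume S = ∫⁻ y : Fin n → ℝ, ENNReal.ofReal (∏ j, h j (y j)) := by
    rw [Measure.volume_eq_prod, Measure.prod_apply_symm hS]
    exact lintegral_congr key
  have hint : (∫ y : Fin n → ℝ, ∏ j, h j (y j))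
      = (∫⁻ y : Fin n → ℝ, ENNReal.ofReal (∏ j, h j (y j))).toReal :=
    integral_eq_lintegral_of_nonneg_ae (ae_of_all _ hg_nonneg) hg_meas.aestronglyMeasurable
  have hstep : hypervolume 1 n (fun _ => a₁) b = ∫ y : Fin n → ℝ, ∏ j, h j (y j) := by
    rw [hypervolume, ← hSdef, hvol, hint]
  rw [hstep, MeasureTheory.integral_fintype_prod_volume_eq_prod (ι := Fin n) h]
  have hone : ∀ j, (∫ t : ℝ, h j t) = a₁ / (a₁ + b j) := by
    intro j
    have hcj : c j = b j / a₁ := rfl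
    have hcjpos : (0:ℝ) < c j := hc j
    rw [hhdef]
    rw [MeasureTheory.integral_indicator measurableSet_Icc,
      MeasureTheory.integral_Icc_eq_integral_Ioc,
      ← intervalIntegral.integral_of_le zero_le_one,
      integral_rpow (Or.inl (by linarith))]
    rw [Real.one_rpow, Real.zero_rpow (by linarith), sub_zero, hcj]
    have h1 : a₁ ≠ 0 := ha.ne'
    have h2 : a₁ + b j ≠ 0 := ne_of_gt (by linarith [hb j])
    have h3 : b j / a₁ + 1 ≠ 0 := by
      have := div_pos (hb j) ha
      linarith
    rw [div_eq_div_iff h3 h2, one_mul]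
    field_simp
    ring
  rw [Finset.prod_congr rfl fun j _ => hone j, Finset.prod_div_distrib,
    Finset.prod_const, card_univ, Fintype.card_fin]
end

section
/- For positive reals a₁,…,aₘ and a positive real b₁, the hypervolume f satisfies f(a₁,…,aₘ; b₁) = 1 − b₁ᵐ / ((b₁+a₁)(b₁+a₂)⋯(b₁+aₘ)). -/
open MeasureTheory Finset

/-- `∫ t in [0,1], t^c = 1/(c+1)` for `c > 0`, in indicator form. -/
lemma integral_indicator_icc_rpow {c : ℝ} (hc : 0 < c) :
    ∫ t : ℝ, (Set.Icc (0:ℝ) 1).indicator (fun t => t ^ c) t = 1 / (c + 1) := by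
  rw [MeasureTheory.integral_indicator measurableSet_Icc,
    MeasureTheory.integral_Icc_eq_integral_Ioc,
    ← intervalIntegral.integral_of_le (by norm_num : (0:ℝ) ≤ 1),
    integral_rpow (Or.inl (by linarith))]
  rw [Real.one_rpow, Real.zero_rpow (by positivity)]
  ring

/-- Characterization of the slice: for `0 ≤ q ≤ 1`, `b > 0`,
`{t ∈ [0,1] : q < t^b} = (q^{1/b}, 1]`. -/
lemma slice_iff {q b t : ℝ} (hq0 : 0 ≤ q) (hb : 0 < b) :
    (t ∈ Set.Icc (0:ℝ) 1 ∧ q < t ^ b) ↔ t ∈ Set.Ioc (q ^ (1/b)) 1 := by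
  constructor
  · rintro ⟨⟨ht0, ht1⟩, hlt⟩
    refine ⟨?_, ht1⟩
    have h1 : q ^ (1/b) < (t ^ b) ^ (1/b) := Real.rpow_lt_rpow hq0 hlt (by positivity)
    rwa [← Real.rpow_mul ht0, mul_one_div, div_self hb.ne', Real.rpow_one] at h1
  · rintro ⟨hlt, ht1⟩
    have hq' : (0:ℝ) ≤ q ^ (1/b) := Real.rpow_nonneg hq0 _
    have ht0 : 0 ≤ t := le_trans hq' hlt.le
    refine ⟨⟨ht0, ht1⟩, ?_⟩
    have h2 : (q ^ (1/b)) ^ b < t ^ b := Real.rpow_lt_rpow hq' hlt hb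
    rwa [← Real.rpow_mul hq0, one_div_mul_cancel hb.ne', Real.rpow_one] at h2

/-- `f(a₁,…,aₘ; b₁) = 1 − b₁ᵐ / ((b₁+a₁)(b₁+a₂)⋯(b₁+aₘ))`. -/
theorem stmt3 (m : ℕ) (a : Fin m → ℝ) (b₁ : ℝ) (ha : ∀ i, 0 < a i) (hb : 0 < b₁) :
    hypervolume m 1 a (fun _ => b₁) = 1 - b₁ ^ m / ∏ i, (b₁ + a i) := by
  classical
  set c : Fin m → ℝ := fun i => a i / b₁ with hc
  have hcpos : ∀ i, 0 < c i := fun i => div_pos (ha i) hb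
  set box : Set (Fin m → ℝ) := Set.univ.pi fun _ => Set.Icc (0:ℝ) 1 with hbox
  have hboxm : MeasurableSet box := MeasurableSet.univ_pi fun _ => measurableSet_Icc
  set S : Set ((Fin m → ℝ) × (Fin 1 → ℝ)) :=
    {z | (∀ i, z.1 i ∈ Set.Icc (0 : ℝ) 1) ∧ (∀ j, z.2 j ∈ Set.Icc (0 : ℝ) 1) ∧
      ∏ i, (z.1 i) ^ (a i) < ∏ j, (z.2 j) ^ ((fun _ : Fin 1 => b₁) j)} with hSdef
  -- measurability of S
  have hmx : Measurable fun z : (Fin m → ℝ) × (Fin 1 → ℝ) => ∏ i, (z.1 i) ^ (a i) :=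
    Finset.measurable_prod _ fun i _ =>
      (Real.continuous_rpow_const (ha i).le).measurable.comp
        ((measurable_pi_apply i).comp measurable_fst)
  have hmy : Measurable fun z : (Fin m → ℝ) × (Fin 1 → ℝ) =>
      ∏ j, (z.2 j) ^ ((fun _ : Fin 1 => b₁) j) :=
    Finset.measurable_prod _ fun j _ =>
      (Real.continuous_rpow_const hb.le).measurable.comp
        ((measurable_pi_apply j).comp measurable_snd)
  have hSeq : S = (box ×ˢ (Set.univ.pi fun _ : Fin 1 => Set.Icc (0:ℝ) 1)) ∩
      {z | ∏ i, (z.1 i) ^ (a i) < ∏ j, (z.2 j) ^ ((fun _ : Fin 1 => b₁) j)} := by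
    ext z
    simp only [hSdef, hbox, Set.mem_setOf_eq, Set.mem_inter_iff, Set.mem_prod, Set.mem_pi,
      Set.mem_univ, forall_true_left, true_implies]
    tauto
  have hS : MeasurableSet S := by
    rw [hSeq]
    exact ((hboxm.prod (MeasurableSet.univ_pi fun _ => measurableSet_Icc)).inter
      (measurableSet_lt hmx hmy))
  -- the inner function
  set p : (Fin m → ℝ) → ℝ := fun x => ∏ i, (x i) ^ (c i) with hp
  set F : (Fin m → ℝ) → ℝ := box.indicator (fun x => 1 - p x) with hF
  -- bounds on p on the box
  have hp_mem : ∀ x ∈ box, 0 ≤ p x ∧ p x ≤ 1 := by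
    intro x hx
    constructor
    · exact Finset.prod_nonneg fun i _ => Real.rpow_nonneg (hx i trivial).1 _
    · exact Finset.prod_le_one
        (fun i _ => Real.rpow_nonneg (hx i trivial).1 _)
        (fun i _ => Real.rpow_le_one (hx i trivial).1 (hx i trivial).2 (hcpos i).le)
  -- slices
  have hslice : ∀ x : Fin m → ℝ, volume (Prod.mk x ⁻¹' S) = ENNReal.ofReal (F x) := by
    intro x
    by_cases hx : x ∈ box
    · set q : ℝ := ∏ i, (x i) ^ (a i) with hq
      have hq0 : 0 ≤ q := Finset.prod_nonneg fun i _ => Real.rpow_nonneg (hx i trivial).1 _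
      have hpre : Prod.mk x ⁻¹' S = Set.univ.pi fun _ : Fin 1 => Set.Ioc (q ^ (1/b₁)) 1 := by
        ext y
        have hxmem : ∀ i, x i ∈ Set.Icc (0:ℝ) 1 := fun i => hx i trivial
        simp only [hSdef, Set.mem_preimage, Set.mem_setOf_eq, Set.mem_pi, Set.mem_univ,
          forall_true_left, true_implies, Fin.forall_fin_one, Fin.prod_univ_one, hxmem,
          implies_true, true_and]
        exact slice_iff hq0 hb
      rw [hpre, volume_pi_pi, Fin.prod_univ_one, Real.volume_Ioc]
      have hqpow : q ^ (1/b₁) = p x := by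
        show (∏ i, (x i) ^ (a i)) ^ (1/b₁) = ∏ i, (x i) ^ (c i)
        rw [← Real.finset_prod_rpow _ _ (fun i _ => Real.rpow_nonneg (hx i trivial).1 _) _]
        refine Finset.prod_congr rfl fun i _ => ?_
        rw [← Real.rpow_mul (hx i trivial).1, mul_one_div]
      rw [hqpow, hF, Set.indicator_of_mem hx]
    · have hxbad : ¬ ∀ i, x i ∈ Set.Icc (0:ℝ) 1 := fun h => hx fun i _ => h i
      have hpre : Prod.mk x ⁻¹' S = ∅ := by
        ext y
        simp only [hSdef, Set.mem_preimage, Set.mem_setOf_eq, Set.mem_empty_iff_false,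
          iff_false, not_and]
        intro h
        exact absurd h hxbad
      rw [hpre, hF, Set.indicator_of_notMem hx]
      simp
  -- integrability of F
  have hbox_cpt : IsCompact box := isCompact_univ_pi fun _ => isCompact_Icc
  have hpcont : Continuous p :=
    continuous_finset_prod _ fun i _ =>
      (Real.continuous_rpow_const (hcpos i).le).comp (continuous_apply i)
  have hFint : Integrable F :=
    (((continuous_const.sub hpcont).continuousOn).integrableOn_compact hbox_cpt).integrable_indicator hboxm
  have hFnn : ∀ x, 0 ≤ F x := by
    intro x
    rw [hF]
    by_cases hx : x ∈ box
    · rw [Set.indicator_of_mem hx]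
      linarith [(hp_mem x hx).2]
    · rw [Set.indicator_of_notMem hx]
  -- compute the volume
  have hvol : volume S = ENNReal.ofReal (∫ x, F x) := by
    rw [MeasureTheory.ofReal_integral_eq_lintegral_ofReal hFint
      (Filter.Eventually.of_forall hFnn)]
    rw [Measure.volume_eq_prod, Measure.prod_apply hS]
    exact lintegral_congr fun x => hslice x
  -- compute the integral
  have hvolbox : volume box = 1 := by
    rw [hbox, volume_pi_pi]
    simp [Real.volume_Icc]
  have hprod_ind : ∀ x : Fin m → ℝ,
      box.indicator p x = ∏ i, (Set.Icc (0:ℝ) 1).indicator (fun t => t ^ (c i)) (x i) := by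
    intro x
    by_cases hx : x ∈ box
    · rw [Set.indicator_of_mem hx]
      exact Finset.prod_congr rfl fun i _ => by rw [Set.indicator_of_mem (hx i trivial)]
    · rw [Set.indicator_of_notMem hx]
      obtain ⟨i, hi⟩ : ∃ i, x i ∉ Set.Icc (0:ℝ) 1 := by
        by_contra h
        push_neg at h
        exact hx fun i _ => h i
      exact (Finset.prod_eq_zero (mem_univ i) (Set.indicator_of_notMem hi _)).symm
  have hint : ∫ x, F x = 1 - ∏ i, (1 / (c i + 1)) := by
    rw [hF, MeasureTheory.integral_indicator hboxm]
    rw [MeasureTheory.integral_sub (integrableOn_const (C := (1:ℝ)) (by rw [hvolbox]; exact ENNReal.one_ne_top) : IntegrableOn (fun _ => (1:ℝ)) box volume)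
      (hpcont.continuousOn.integrableOn_compact hbox_cpt)]
    rw [MeasureTheory.setIntegral_const, measureReal_def, hvolbox]
    rw [← MeasureTheory.integral_indicator hboxm]
    have : ∫ x, box.indicator p x = ∏ i, (1 / (c i + 1)) := by
      calc ∫ x, box.indicator p x
          = ∫ x : Fin m → ℝ, ∏ i, (Set.Icc (0:ℝ) 1).indicator (fun t => t ^ (c i)) (x i) :=
            integral_congr_ae (Filter.Eventually.of_forall hprod_ind)
        _ = ∏ i, ∫ t : ℝ, (Set.Icc (0:ℝ) 1).indicator (fun t => t ^ (c i)) t :=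
            MeasureTheory.integral_fintype_prod_eq_prod (ι := Fin m) _
        _ = ∏ i, (1 / (c i + 1)) :=
            Finset.prod_congr rfl fun i _ => integral_indicator_icc_rpow (hcpos i)
    rw [this]
    simp
  -- final arithmetic
  have hfinal : ∏ i, (1 / (c i + 1)) = b₁ ^ m / ∏ i, (b₁ + a i) := by
    have h1 : ∀ i, 1 / (c i + 1) = b₁ / (b₁ + a i) := by
      intro i
      have h2 : b₁ + a i ≠ 0 := ne_of_gt (by linarith [ha i])
      show 1 / (a i / b₁ + 1) = b₁ / (b₁ + a i)
      rw [div_add' _ _ _ hb.ne', one_div_div, one_mul, add_comm]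
    rw [Finset.prod_congr rfl fun i _ => h1 i, Finset.prod_div_distrib, Finset.prod_const,
      Finset.card_univ, Fintype.card_fin]
  have hIcc : ∫ x, F x ≥ 0 := integral_nonneg hFnn
  rw [hypervolume]
  rw [show {z : (Fin m → ℝ) × (Fin 1 → ℝ) |
    (∀ i, z.1 i ∈ Set.Icc (0 : ℝ) 1) ∧ (∀ j, z.2 j ∈ Set.Icc (0 : ℝ) 1) ∧
    ∏ i, (z.1 i) ^ (a i) < ∏ j, (z.2 j) ^ ((fun _ : Fin 1 => b₁) j)} = S from rfl]
  rw [hvol, ENNReal.toReal_ofReal hIcc, hint, hfinal]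
end

section
/- For positive reals a₁,…,aₘ and b₁,…,bₙ, the hypervolume f satisfies f(a₁,…,aₘ; b₁,…,bₙ) = ∫_E exp(−(X₁+⋯+Xₘ) − (Y₁+⋯+Yₙ)) dX dY, where E = {(X,Y) ∈ ℝ^m × ℝ^n : Xᵢ ≥ 0 for all i, Yⱼ ≥ 0 for all j, and a₁X₁+⋯+aₘXₘ > b₁Y₁+⋯+bₙYₙ}. -/
open MeasureTheory Finset

/-- The derivative of the coordinatewise map `X ↦ (exp (-X i))ᵢ`. -/
noncomputable def expNegDeriv {k : ℕ} (X : Fin k → ℝ) : (Fin k → ℝ) →L[ℝ] (Fin k → ℝ) :=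
  ContinuousLinearMap.pi (fun i => (-Real.exp (-X i)) • ContinuousLinearMap.proj i)

lemma hasFDerivAt_expNeg {k : ℕ} (X : Fin k → ℝ) :
    HasFDerivAt (fun (Y : Fin k → ℝ) (i : Fin k) => Real.exp (-Y i)) (expNegDeriv X) X := by
  apply hasFDerivAt_pi.2
  intro i
  have h1 : HasDerivAt (fun t : ℝ => Real.exp (-t)) (-Real.exp (-X i)) (X i) := by
    have := (Real.hasDerivAt_exp (-(X i))).comp (X i) ((hasDerivAt_id (X i)).neg)
    rw [mul_neg_one] at this; exact this
  have h2 : HasFDerivAt (fun Y : Fin k → ℝ => Y i)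
      (ContinuousLinearMap.proj i : (Fin k → ℝ) →L[ℝ] ℝ) X := hasFDerivAt_apply i X
  exact h1.comp_hasFDerivAt X h2

lemma det_expNegDeriv {k : ℕ} (X : Fin k → ℝ) :
    LinearMap.det ((expNegDeriv X : (Fin k → ℝ) →L[ℝ] (Fin k → ℝ)) :
        (Fin k → ℝ) →ₗ[ℝ] (Fin k → ℝ)) = ∏ i, (-Real.exp (-X i)) := by
  have h : ((expNegDeriv X : (Fin k → ℝ) →L[ℝ] (Fin k → ℝ)) :
        (Fin k → ℝ) →ₗ[ℝ] (Fin k → ℝ)) =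
      Matrix.toLin' (Matrix.diagonal fun i => -Real.exp (-X i)) := by
    apply LinearMap.ext; intro v
    funext i
    simp [expNegDeriv, Matrix.toLin'_apply, Matrix.mulVec_diagonal]
  rw [h, LinearMap.det_toLin', Matrix.det_diagonal]

lemma det_prodMap_pi {m n : ℕ} (f : (Fin m → ℝ) →ₗ[ℝ] (Fin m → ℝ))
    (g : (Fin n → ℝ) →ₗ[ℝ] (Fin n → ℝ)) :
    LinearMap.det (f.prodMap g) = LinearMap.det f * LinearMap.det g := by
  rw [← LinearMap.det_toMatrix ((Pi.basisFun ℝ (Fin m)).prod (Pi.basisFun ℝ (Fin n))),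
    LinearMap.toMatrix_prodMap, Matrix.det_fromBlocks_zero₂₁,
    LinearMap.det_toMatrix, LinearMap.det_toMatrix]

lemma prod_exp_rpow {k : ℕ} (c : Fin k → ℝ) (X : Fin k → ℝ) :
    ∏ i, (Real.exp (-X i)) ^ (c i) = Real.exp (-∑ i, c i * X i) := by
  have h : ∀ i : Fin k, (Real.exp (-X i)) ^ (c i) = Real.exp (-(c i * X i)) := by
    intro i
    rw [Real.rpow_def_of_pos (Real.exp_pos _), Real.log_exp]
    ring_nf
  calc ∏ i, (Real.exp (-X i)) ^ (c i) = ∏ i, Real.exp (-(c i * X i)) :=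
        Finset.prod_congr rfl (fun i _ => h i)
    _ = Real.exp (∑ i, -(c i * X i)) := (Real.exp_sum _ _).symm
    _ = Real.exp (-∑ i, c i * X i) := by rw [Finset.sum_neg_distrib]

/-- absolute value of the Jacobian determinant -/
lemma abs_det_prod {m n : ℕ} (X : Fin m → ℝ) (Y : Fin n → ℝ) :
    |((expNegDeriv X).prodMap (expNegDeriv Y)).det|
      = Real.exp (-(∑ i, X i) - ∑ j, Y j) := by
  have : ((expNegDeriv X).prodMap (expNegDeriv Y)).det
      = (∏ i, (-Real.exp (-X i))) * ∏ j, (-Real.exp (-Y j)) := by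
    rw [ContinuousLinearMap.det, ContinuousLinearMap.coe_prodMap, det_prodMap_pi,
      det_expNegDeriv, det_expNegDeriv]
  rw [this, abs_mul, Finset.abs_prod, Finset.abs_prod]
  have habs : ∀ t : ℝ, |(-Real.exp t)| = Real.exp t := by
    intro t; rw [abs_neg, Real.abs_exp]
  simp only [habs]
  rw [← Real.exp_sum, ← Real.exp_sum, ← Real.exp_add]
  congr 1
  rw [Finset.sum_neg_distrib, Finset.sum_neg_distrib]
  ring

/-- the hypervolume equals the integral of
`exp(−(X₁+⋯+Xₘ) − (Y₁+⋯+Yₙ))` over the region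
`E = {(X,Y) : Xᵢ ≥ 0, Yⱼ ≥ 0, a₁X₁+⋯+aₘXₘ > b₁Y₁+⋯+bₙYₙ}`. -/
theorem stmt10 (m n : ℕ) (a : Fin m → ℝ) (b : Fin n → ℝ)
    (ha : ∀ i, 0 < a i) (hb : ∀ j, 0 < b j) :
    hypervolume m n a b
      = ∫ z in {z : (Fin m → ℝ) × (Fin n → ℝ) |
            (∀ i, 0 ≤ z.1 i) ∧ (∀ j, 0 ≤ z.2 j) ∧ ∑ j, b j * z.2 j < ∑ i, a i * z.1 i},
          Real.exp (-(∑ i, z.1 i) - ∑ j, z.2 j) := by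
  classical
  -- the open region
  set s : Set ((Fin m → ℝ) × (Fin n → ℝ)) :=
    {z | (∀ i, 0 < z.1 i) ∧ (∀ j, 0 < z.2 j) ∧ ∑ j, b j * z.2 j < ∑ i, a i * z.1 i} with hs_def
  set Efull : Set ((Fin m → ℝ) × (Fin n → ℝ)) :=
    {z | (∀ i, 0 ≤ z.1 i) ∧ (∀ j, 0 ≤ z.2 j) ∧ ∑ j, b j * z.2 j < ∑ i, a i * z.1 i}
    with hE_def
  set S : Set ((Fin m → ℝ) × (Fin n → ℝ)) :=
    {z | (∀ i, z.1 i ∈ Set.Icc (0 : ℝ) 1) ∧ (∀ j, z.2 j ∈ Set.Icc (0 : ℝ) 1) ∧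
      ∏ i, (z.1 i) ^ (a i) < ∏ j, (z.2 j) ^ (b j)} with hS_def
  set S0 : Set ((Fin m → ℝ) × (Fin n → ℝ)) :=
    {z | (∀ i, z.1 i ∈ Set.Ioo (0 : ℝ) 1) ∧ (∀ j, z.2 j ∈ Set.Ioo (0 : ℝ) 1) ∧
      ∏ i, (z.1 i) ^ (a i) < ∏ j, (z.2 j) ^ (b j)} with hS0_def
  set f : ((Fin m → ℝ) × (Fin n → ℝ)) → ((Fin m → ℝ) × (Fin n → ℝ)) :=
    fun z => (fun i => Real.exp (-z.1 i), fun j => Real.exp (-z.2 j)) with hf_def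
  -- measurability of s
  have hs : MeasurableSet s := by
    have h1 : ∀ i : Fin m, Measurable fun z : (Fin m → ℝ) × (Fin n → ℝ) => z.1 i :=
      fun i => (measurable_pi_apply i).comp measurable_fst
    have h2 : ∀ j : Fin n, Measurable fun z : (Fin m → ℝ) × (Fin n → ℝ) => z.2 j :=
      fun j => (measurable_pi_apply j).comp measurable_snd
    have hA : MeasurableSet {z : (Fin m → ℝ) × (Fin n → ℝ) | ∀ i, 0 < z.1 i} := by
      rw [Set.setOf_forall]
      exact MeasurableSet.iInter fun i => measurableSet_lt measurable_const (h1 i)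
    have hB : MeasurableSet {z : (Fin m → ℝ) × (Fin n → ℝ) | ∀ j, 0 < z.2 j} := by
      rw [Set.setOf_forall]
      exact MeasurableSet.iInter fun j => measurableSet_lt measurable_const (h2 j)
    have hC : MeasurableSet {z : (Fin m → ℝ) × (Fin n → ℝ) |
        ∑ j, b j * z.2 j < ∑ i, a i * z.1 i} :=
      measurableSet_lt (Finset.measurable_sum _ fun j _ => (h2 j).const_mul _)
        (Finset.measurable_sum _ fun i _ => (h1 i).const_mul _)
    have hset : s = {z : (Fin m → ℝ) × (Fin n → ℝ) | ∀ i, 0 < z.1 i} ∩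
        ({z | ∀ j, 0 < z.2 j} ∩ {z | ∑ j, b j * z.2 j < ∑ i, a i * z.1 i}) := by
      ext z
      simp only [hs_def, Set.mem_setOf_eq, Set.mem_inter_iff]
    rw [hset]
    exact hA.inter (hB.inter hC)
  -- injectivity
  have hinj : Set.InjOn f s := by
    intro z _ w _ h
    have h1 := congrArg Prod.fst h
    have h2 := congrArg Prod.snd h
    have e1 : z.1 = w.1 := by
      funext i
      have := congrFun h1 i
      simpa using neg_injective (Real.exp_injective this)
    have e2 : z.2 = w.2 := by
      funext j
      have := congrFun h2 j
      simpa using neg_injective (Real.exp_injective this)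
    exact Prod.ext e1 e2
  -- derivative
  have hder : ∀ z ∈ s, HasFDerivWithinAt f ((expNegDeriv z.1).prodMap (expNegDeriv z.2)) s z := by
    intro z _
    have h1 := hasFDerivAt_expNeg z.1
    have h2 := hasFDerivAt_expNeg z.2
    have := h1.prodMap (p := z) h2
    exact this.hasFDerivWithinAt
  -- the image
  have himg : f '' s = S0 := by
    ext z
    constructor
    · rintro ⟨w, ⟨hw1, hw2, hw3⟩, rfl⟩
      refine ⟨fun i => ?_, fun j => ?_, ?_⟩
      · exact ⟨Real.exp_pos _, Real.exp_lt_one_iff.2 (neg_neg_iff_pos.2 (hw1 i))⟩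
      · exact ⟨Real.exp_pos _, Real.exp_lt_one_iff.2 (neg_neg_iff_pos.2 (hw2 j))⟩
      · show (∏ i, (Real.exp (-w.1 i)) ^ (a i)) < ∏ j, (Real.exp (-w.2 j)) ^ (b j)
        rw [prod_exp_rpow, prod_exp_rpow]
        exact Real.exp_lt_exp.2 (by linarith)
    · rintro ⟨h1, h2, h3⟩
      refine ⟨(fun i => -Real.log (z.1 i), fun j => -Real.log (z.2 j)), ⟨?_, ?_, ?_⟩, ?_⟩
      · intro i
        simpa using Real.log_neg (h1 i).1 (h1 i).2
      · intro j
        simpa using Real.log_neg (h2 j).1 (h2 j).2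
      · have e1 : ∀ i, Real.exp (-(-Real.log (z.1 i))) = z.1 i := fun i => by
          rw [neg_neg, Real.exp_log (h1 i).1]
        have e2 : ∀ j, Real.exp (-(-Real.log (z.2 j))) = z.2 j := fun j => by
          rw [neg_neg, Real.exp_log (h2 j).1]
        have k1 : ∏ i, (z.1 i) ^ (a i)
            = Real.exp (-∑ i, a i * (-Real.log (z.1 i))) := by
          rw [← prod_exp_rpow]
          exact Finset.prod_congr rfl fun i _ => by rw [e1]
        have k2 : ∏ j, (z.2 j) ^ (b j)
            = Real.exp (-∑ j, b j * (-Real.log (z.2 j))) := by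
          rw [← prod_exp_rpow]
          exact Finset.prod_congr rfl fun j _ => by rw [e2]
        rw [k1, k2] at h3
        have := Real.exp_lt_exp.1 h3
        linarith
      · have e1 : ∀ i, Real.exp (-(-Real.log (z.1 i))) = z.1 i := fun i => by
          rw [neg_neg, Real.exp_log (h1 i).1]
        have e2 : ∀ j, Real.exp (-(-Real.log (z.2 j))) = z.2 j := fun j => by
          rw [neg_neg, Real.exp_log (h2 j).1]
        simp only [hf_def]
        exact Prod.ext (funext fun i => e1 i) (funext fun j => e2 j)
  -- change of variables
  haveI : (volume : Measure ((Fin m → ℝ) × (Fin n → ℝ))).IsAddHaarMeasure := by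
    rw [MeasureTheory.Measure.volume_eq_prod]; exact Measure.prod.instIsAddHaarMeasure _ _
  have key := integral_image_eq_integral_abs_det_fderiv_smul volume hs hder hinj
    (fun _ => (1 : ℝ))
  rw [himg] at key
  -- compute both sides of key
  have lhs_eq : (∫ _x in S0, (1 : ℝ)) = (volume S0).toReal := by
    rw [setIntegral_const]; simp; rfl
  have rhs_eq : (∫ x in s, |((expNegDeriv x.1).prodMap (expNegDeriv x.2)).det| • (1 : ℝ))
      = ∫ z in s, Real.exp (-(∑ i, z.1 i) - ∑ j, z.2 j) := by
    apply setIntegral_congr_fun hs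
    intro z _
    simp only [smul_eq_mul, mul_one]
    exact abs_det_prod z.1 z.2
  rw [lhs_eq, rhs_eq] at key
  -- volume S = volume S0
  have hS0S : S0 ⊆ S := by
    rintro z ⟨h1, h2, h3⟩
    exact ⟨fun i => ⟨le_of_lt (h1 i).1, le_of_lt (h1 i).2⟩,
      fun j => ⟨le_of_lt (h2 j).1, le_of_lt (h2 j).2⟩, h3⟩
  have hnull : volume (((Set.univ.pi fun _ : Fin m => Set.Icc (0:ℝ) 1) ×ˢ
      (Set.univ.pi fun _ : Fin n => Set.Icc (0:ℝ) 1)) \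
      ((Set.univ.pi fun _ : Fin m => Set.Ioo (0:ℝ) 1) ×ˢ
      (Set.univ.pi fun _ : Fin n => Set.Ioo (0:ℝ) 1))) = 0 := by
    have hsub : (Set.univ.pi fun _ : Fin m => Set.Ioo (0:ℝ) 1) ×ˢ
        (Set.univ.pi fun _ : Fin n => Set.Ioo (0:ℝ) 1) ⊆
        (Set.univ.pi fun _ : Fin m => Set.Icc (0:ℝ) 1) ×ˢ
        (Set.univ.pi fun _ : Fin n => Set.Icc (0:ℝ) 1) :=
      Set.prod_mono (Set.pi_mono fun _ _ => Set.Ioo_subset_Icc_self)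
        (Set.pi_mono fun _ _ => Set.Ioo_subset_Icc_self)
    have hmeas : NullMeasurableSet ((Set.univ.pi fun _ : Fin m => Set.Ioo (0:ℝ) 1) ×ˢ
        (Set.univ.pi fun _ : Fin n => Set.Ioo (0:ℝ) 1)) volume :=
      (((MeasurableSet.univ_pi fun _ => measurableSet_Ioo).prod
        (MeasurableSet.univ_pi fun _ => measurableSet_Ioo))).nullMeasurableSet
    have hvol_open : volume ((Set.univ.pi fun _ : Fin m => Set.Ioo (0:ℝ) 1) ×ˢ
        (Set.univ.pi fun _ : Fin n => Set.Ioo (0:ℝ) 1)) = 1 := by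
      rw [MeasureTheory.Measure.volume_eq_prod, MeasureTheory.Measure.prod_prod,
        volume_pi_pi, volume_pi_pi]
      simp [Real.volume_Ioo]
    have hvol_closed : volume ((Set.univ.pi fun _ : Fin m => Set.Icc (0:ℝ) 1) ×ˢ
        (Set.univ.pi fun _ : Fin n => Set.Icc (0:ℝ) 1)) = 1 := by
      rw [MeasureTheory.Measure.volume_eq_prod, MeasureTheory.Measure.prod_prod,
        volume_pi_pi, volume_pi_pi]
      simp [Real.volume_Icc]
    rw [measure_diff hsub hmeas (by rw [hvol_open]; exact ENNReal.one_ne_top),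
      hvol_open, hvol_closed, tsub_self]
  have hdiffnull : volume (S \ S0) = 0 := by
    apply measure_mono_null _ hnull
    rintro z ⟨⟨h1, h2, h3⟩, hz⟩
    constructor
    · exact ⟨fun i _ => h1 i, fun j _ => h2 j⟩
    · intro hzopen
      exact hz ⟨fun i => hzopen.1 i (Set.mem_univ i), fun j => hzopen.2 j (Set.mem_univ j), h3⟩
  have hvolSS0 : volume S = volume S0 := by
    apply le_antisymm
    · calc volume S ≤ volume (S0 ∪ (S \ S0)) :=
            measure_mono (fun z hz => by
              by_cases h : z ∈ S0
              · exact Or.inl h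
              · exact Or.inr ⟨hz, h⟩)
        _ ≤ volume S0 + volume (S \ S0) := measure_union_le _ _
        _ = volume S0 := by rw [hdiffnull, add_zero]
    · exact measure_mono hS0S
  -- Efull =ᵐ s
  have hEs : Efull =ᵐ[volume] s := by
    have hsE : s ⊆ Efull := by
      rintro z ⟨h1, h2, h3⟩
      exact ⟨fun i => le_of_lt (h1 i), fun j => le_of_lt (h2 j), h3⟩
    have hEsnull : volume (Efull \ s) = 0 := by
      have hcover : Efull \ s ⊆ (⋃ i : Fin m, {z : (Fin m → ℝ) × (Fin n → ℝ) | z.1 i = 0}) ∪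
          ⋃ j : Fin n, {z : (Fin m → ℝ) × (Fin n → ℝ) | z.2 j = 0} := by
        rintro z ⟨⟨h1, h2, h3⟩, hz⟩
        by_contra hcon
        simp only [Set.mem_union, Set.mem_iUnion, not_or, not_exists] at hcon
        apply hz
        refine ⟨fun i => lt_of_le_of_ne (h1 i) ?_, fun j => lt_of_le_of_ne (h2 j) ?_, h3⟩
        · intro h; exact hcon.1 i h.symm
        · intro h; exact hcon.2 j h.symm
      apply measure_mono_null hcover
      apply measure_union_null
      · apply measure_iUnion_null
        intro i
        have : {z : (Fin m → ℝ) × (Fin n → ℝ) | z.1 i = 0}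
            = {X : Fin m → ℝ | X i = 0} ×ˢ (Set.univ : Set (Fin n → ℝ)) := by
          ext z; simp
        rw [this, MeasureTheory.Measure.volume_eq_prod, MeasureTheory.Measure.prod_prod]
        have : volume {X : Fin m → ℝ | X i = 0} = 0 := by
          rw [volume_pi]
          exact MeasureTheory.Measure.pi_hyperplane _ i 0
        rw [this, zero_mul]
      · apply measure_iUnion_null
        intro j
        have : {z : (Fin m → ℝ) × (Fin n → ℝ) | z.2 j = 0}
            = (Set.univ : Set (Fin m → ℝ)) ×ˢ {Y : Fin n → ℝ | Y j = 0} := by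
          ext z; simp
        rw [this, MeasureTheory.Measure.volume_eq_prod, MeasureTheory.Measure.prod_prod]
        have : volume {Y : Fin n → ℝ | Y j = 0} = 0 := by
          rw [volume_pi]
          exact MeasureTheory.Measure.pi_hyperplane _ j 0
        rw [this, mul_zero]
    exact MeasureTheory.ae_eq_set.2 ⟨hEsnull,
      by rw [Set.diff_eq_empty.2 hsE]; simp⟩
  -- conclude
  show (volume S).toReal = ∫ z in Efull, Real.exp (-(∑ i, z.1 i) - ∑ j, z.2 j)
  rw [hvolSS0, key]
  exact (setIntegral_congr_set hEs).symm
end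

section
/- Let a₁,…,aₘ be pairwise distinct positive reals and b₁,…,bₙ be positive reals. Then the hypervolume satisfies the closed form f(a₁,…,aₘ; b₁,…,bₙ) = Σ_{i=1}^{m} ( ∏_{k≠i} aᵢ/(aᵢ − aₖ) ) · ( ∏_{j=1}^{n} aᵢ/(aᵢ + bⱼ) ). -/
open MeasureTheory Finset

noncomputable def coefL {m : ℕ} (a : Fin m → ℝ) (i : Fin m) : ℝ :=
  ∏ k ∈ Finset.univ.erase i, a i / (a i - a k)

open Polynomial in
lemma lagrange_identity {m : ℕ} (hm : m ≠ 0) (v : Fin m → ℝ) (hv : Function.Injective v) :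
    ∑ i, ∏ k ∈ Finset.univ.erase i, v i / (v i - v k) = 1 := by
  have hinj : Set.InjOn v (Finset.univ : Finset (Fin m)) := fun x _ y _ h => hv h
  have hcard : (Finset.univ : Finset (Fin m)).card = m := by simp
  have hdeg : (X ^ (m - 1) : ℝ[X]).degree < (Finset.univ : Finset (Fin m)).card := by
    rw [Polynomial.degree_X_pow, hcard]
    exact_mod_cast Nat.sub_lt (Nat.pos_of_ne_zero hm) one_pos
  have h := (Lagrange.eq_interpolate hinj hdeg).symm
  have hcoeff := congrArg (fun p : ℝ[X] => p.coeff (m - 1)) h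
  simp only [Lagrange.interpolate_apply] at hcoeff
  rw [Polynomial.coeff_X_pow, if_pos rfl, Polynomial.finset_sum_coeff] at hcoeff
  have key : ∀ i : Fin m,
      (C (eval (v i) (X ^ (m-1) : ℝ[X])) * Lagrange.basis Finset.univ v i).coeff (m - 1)
        = ∏ k ∈ Finset.univ.erase i, v i / (v i - v k) := by
    intro i
    rw [Polynomial.coeff_C_mul]
    have hnd : (Lagrange.basis Finset.univ v i).natDegree = m - 1 := by
      rw [Lagrange.natDegree_basis hinj (Finset.mem_univ i), hcard]
    have hlc : (Lagrange.basis Finset.univ v i).coeff (m - 1) =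
        ∏ k ∈ Finset.univ.erase i, (v i - v k)⁻¹ := by
      rw [← hnd, Polynomial.coeff_natDegree, Lagrange.basis, Polynomial.leadingCoeff_prod]
      refine Finset.prod_congr rfl fun j hj => ?_
      have hne : v i ≠ v j := fun hh => (Finset.ne_of_mem_erase hj).symm (hv hh)
      rw [Lagrange.basisDivisor, Polynomial.leadingCoeff_mul, Polynomial.leadingCoeff_C,
        Polynomial.leadingCoeff_X_sub_C, mul_one]
    rw [hlc, Polynomial.eval_pow, Polynomial.eval_X]
    rw [Finset.prod_div_distrib, Finset.prod_const, Finset.card_erase_of_mem (Finset.mem_univ i),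
      hcard]
    rw [div_eq_mul_inv, ← Finset.prod_inv_distrib]
  rw [Finset.sum_congr rfl fun i _ => key i] at hcoeff
  exact hcoeff

lemma sum_coefL_eq_one {m : ℕ} (hm : m ≠ 0) (a : Fin m → ℝ) (ha : Function.Injective a) :
    ∑ i, coefL a i = 1 :=
  lagrange_identity hm a ha

lemma coefL_succ {m : ℕ} (a : Fin (m+1) → ℝ) (i : Fin m) :
    coefL a i.succ = (a i.succ / (a i.succ - a 0)) * coefL (fun j => a j.succ) i := by
  unfold coefL
  have hset : (Finset.univ.erase i.succ : Finset (Fin (m+1)))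
      = insert 0 ((Finset.univ.erase i).image Fin.succ) := by
    ext k
    simp only [Finset.mem_erase, Finset.mem_univ, and_true, Finset.mem_insert,
      Finset.mem_image]
    constructor
    · intro hk
      rcases Fin.eq_zero_or_eq_succ k with h0 | ⟨j, rfl⟩
      · exact Or.inl h0
      · exact Or.inr ⟨j, fun hj => hk (by rw [hj]), rfl⟩
    · rintro (rfl | ⟨j, hj, rfl⟩)
      · exact (Fin.succ_ne_zero i).symm
      · exact fun h => hj (Fin.succ_injective _ h)
  rw [hset, Finset.prod_insert (by
      intro h
      rcases Finset.mem_image.mp h with ⟨j, _, hj⟩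
      exact Fin.succ_ne_zero j hj),
    Finset.prod_image (fun x _ y _ h => Fin.succ_injective _ h)]

lemma box_eq (m : ℕ) : {x : Fin m → ℝ | ∀ i, x i ∈ Set.Icc (0:ℝ) 1}
    = Set.pi Set.univ (fun _ => Set.Icc (0:ℝ) 1) := by
  ext x; simp only [Set.mem_univ_pi, Set.mem_setOf_eq]

lemma measurableSet_box (m : ℕ) :
    MeasurableSet {x : Fin m → ℝ | ∀ i, x i ∈ Set.Icc (0:ℝ) 1} := by
  rw [box_eq]; exact MeasurableSet.univ_pi fun i => measurableSet_Icc

lemma volume_box (m : ℕ) : volume {x : Fin m → ℝ | ∀ i, x i ∈ Set.Icc (0:ℝ) 1} = 1 := by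
  rw [box_eq, volume_pi_pi]; simp

lemma continuous_prodRpow {m : ℕ} (a : Fin m → ℝ) (ha : ∀ i, 0 < a i) :
    Continuous fun x : Fin m → ℝ => ∏ i, (x i) ^ (a i) :=
  continuous_finset_prod _ fun i _ =>
    (Real.continuous_rpow_const (ha i).le).comp (continuous_apply i)

lemma prod_rpow_le_one {m : ℕ} (a : Fin m → ℝ) (ha : ∀ i, 0 < a i) (x : Fin m → ℝ)
    (hx : ∀ i, x i ∈ Set.Icc (0:ℝ) 1) : ∏ i, (x i) ^ (a i) ≤ 1 :=
  Finset.prod_le_one (fun i _ => Real.rpow_nonneg (hx i).1 _)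
    (fun i _ => Real.rpow_le_one (hx i).1 (hx i).2 (ha i).le)

lemma prod_rpow_nonneg {m : ℕ} (a : Fin m → ℝ) (x : Fin m → ℝ)
    (hx : ∀ i, x i ∈ Set.Icc (0:ℝ) 1) : 0 ≤ ∏ i, (x i) ^ (a i) :=
  Finset.prod_nonneg fun i _ => Real.rpow_nonneg (hx i).1 _

lemma measurableSet_slice {m : ℕ} (a : Fin m → ℝ) (ha : ∀ i, 0 < a i) (t : ℝ) :
    MeasurableSet {x : Fin m → ℝ | (∀ i, x i ∈ Set.Icc (0:ℝ) 1) ∧ ∏ i, (x i) ^ (a i) < t} := by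
  have : {x : Fin m → ℝ | (∀ i, x i ∈ Set.Icc (0:ℝ) 1) ∧ ∏ i, (x i) ^ (a i) < t}
      = {x : Fin m → ℝ | ∀ i, x i ∈ Set.Icc (0:ℝ) 1}
        ∩ ((fun x : Fin m → ℝ => ∏ i, (x i) ^ (a i)) ⁻¹' Set.Iio t) := rfl
  rw [this]
  exact (measurableSet_box m).inter
    ((continuous_prodRpow a ha).measurable measurableSet_Iio)

open MeasureTheory Finset in
lemma slice_volume : ∀ (m : ℕ) (a : Fin m → ℝ), (∀ i, 0 < a i) → Function.Injective a →
    ∀ t : ℝ, 0 ≤ t → t ≤ 1 →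
    volume {x : Fin m → ℝ | (∀ i, x i ∈ Set.Icc (0:ℝ) 1) ∧ ∏ i, (x i) ^ (a i) < t}
      = ENNReal.ofReal (∑ i, coefL a i * t ^ (1 / a i)) ∧
      0 ≤ ∑ i, coefL a i * t ^ (1 / a i) := by
  intro m
  induction m with
  | zero =>
    intro a ha hinj t ht0 ht1
    have hset : {x : Fin 0 → ℝ | (∀ i, x i ∈ Set.Icc (0:ℝ) 1) ∧ ∏ i, (x i) ^ (a i) < t} = ∅ := by
      ext x
      simp only [Set.mem_setOf_eq, Set.mem_empty_iff_false, iff_false, not_and, not_lt]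
      intro _
      simpa using ht1
    rw [hset]
    simp
  | succ m IH =>
    intro a ha hinj t ht0 ht1
    have ha0 : 0 < a 0 := ha 0
    set A : Fin m → ℝ := fun j => a j.succ with hA
    have haA : ∀ i, 0 < A i := fun i => ha i.succ
    have hinjA : Function.Injective A := fun i j h => Fin.succ_injective _ (hinj h)
    rcases eq_or_lt_of_le ht0 with rfl | htpos
    · have hzero : ∀ i : Fin (m+1), (0:ℝ) ^ (1 / a i) = 0 :=
        fun i => Real.zero_rpow (one_div_ne_zero (ha i).ne')
      have hset : {x : Fin (m+1) → ℝ | (∀ i, x i ∈ Set.Icc (0:ℝ) 1)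
          ∧ ∏ i, (x i) ^ (a i) < 0} = ∅ := by
        ext x
        simp only [Set.mem_setOf_eq, Set.mem_empty_iff_false, iff_false, not_and, not_lt]
        intro hx
        exact prod_rpow_nonneg a x hx
      have hzs : ∑ i : Fin (m+1), coefL a i * (0:ℝ) ^ (1 / a i) = 0 := by
        refine Finset.sum_eq_zero fun i _ => ?_
        rw [hzero i, mul_zero]
      rw [hset, hzs]
      simp
    · set s : ℝ := t ^ (1 / a 0) with hs
      have hs0 : 0 < s := Real.rpow_pos_of_pos htpos _
      have hs1 : s ≤ 1 := Real.rpow_le_one ht0 ht1 (by positivity)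
      have hsa : s ^ (a 0) = t := by
        rw [hs, ← Real.rpow_mul ht0, one_div_mul_cancel ha0.ne', Real.rpow_one]
      set T : Set (ℝ × (Fin m → ℝ)) :=
        {p | p.1 ∈ Set.Icc (0:ℝ) 1 ∧ ((∀ i, p.2 i ∈ Set.Icc (0:ℝ) 1)
          ∧ p.1 ^ (a 0) * ∏ i, (p.2 i) ^ (A i) < t)} with hT
      have hTm : MeasurableSet T := by
        have h1 : MeasurableSet {p : ℝ × (Fin m → ℝ) | p.1 ∈ Set.Icc (0:ℝ) 1} :=
          measurable_fst measurableSet_Icc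
        have h2 : MeasurableSet {p : ℝ × (Fin m → ℝ) | ∀ i, p.2 i ∈ Set.Icc (0:ℝ) 1} :=
          measurable_snd (measurableSet_box m)
        have hc : Continuous fun p : ℝ × (Fin m → ℝ) =>
            p.1 ^ (a 0) * ∏ i, (p.2 i) ^ (A i) :=
          ((Real.continuous_rpow_const ha0.le).comp continuous_fst).mul
            ((continuous_prodRpow A haA).comp continuous_snd)
        exact h1.inter (h2.inter (hc.measurable measurableSet_Iio))
      set e := MeasurableEquiv.piFinSuccAbove (fun _ : Fin (m+1) => ℝ) 0 with he
      have hpre : {x : Fin (m+1) → ℝ | (∀ i, x i ∈ Set.Icc (0:ℝ) 1)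
          ∧ ∏ i, (x i) ^ (a i) < t} = e ⁻¹' T := by
        ext x
        have hex : e x = (x 0, fun i => x i.succ) := by
          simp only [he, MeasurableEquiv.piFinSuccAbove_apply]
          refine Prod.ext rfl ?_
          funext j
          simp [Fin.removeNth_zero, Fin.tail]
        simp only [Set.mem_preimage, hex, hT, Set.mem_setOf_eq]
        constructor
        · rintro ⟨hbox, hlt⟩
          refine ⟨hbox 0, fun i => hbox i.succ, ?_⟩
          rwa [Fin.prod_univ_succ] at hlt
        · rintro ⟨h0, hsucc, hlt⟩
          refine ⟨fun i => Fin.cases h0 hsucc i, ?_⟩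
          rwa [Fin.prod_univ_succ]
      have hvol : volume {x : Fin (m+1) → ℝ | (∀ i, x i ∈ Set.Icc (0:ℝ) 1)
          ∧ ∏ i, (x i) ^ (a i) < t} = volume T := by
        rw [hpre]
        exact (volume_preserving_piFinSuccAbove (fun _ : Fin (m+1) => ℝ) 0).measure_preimage
          hTm.nullMeasurableSet
      have hslice_out : ∀ x : ℝ, x ∉ Set.Icc (0:ℝ) 1 → Prod.mk x ⁻¹' T = ∅ := by
        intro x hx
        ext z
        simp only [Set.mem_preimage, hT, Set.mem_setOf_eq, Set.mem_empty_iff_false, iff_false]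
        exact fun h => hx h.1
      have hslice_lo : ∀ x ∈ Set.Ioo (0:ℝ) s,
          Prod.mk x ⁻¹' T = {z : Fin m → ℝ | ∀ i, z i ∈ Set.Icc (0:ℝ) 1} := by
        intro x hx
        have hx1 : x ≤ 1 := le_trans hx.2.le hs1
        ext z
        simp only [Set.mem_preimage, hT, Set.mem_setOf_eq]
        constructor
        · exact fun h => h.2.1
        · intro hz
          refine ⟨⟨hx.1.le, hx1⟩, hz, ?_⟩
          have h1 : ∏ i, (z i) ^ (A i) ≤ 1 := prod_rpow_le_one A haA z hz
          have h2 : x ^ (a 0) < t := by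
            rw [← hsa]
            exact Real.rpow_lt_rpow hx.1.le hx.2 ha0
          have h3 : (0:ℝ) ≤ x ^ (a 0) := Real.rpow_nonneg hx.1.le _
          nlinarith [prod_rpow_nonneg A z hz]
      have hslice_hi : ∀ x ∈ Set.Ioo s 1,
          Prod.mk x ⁻¹' T = {z : Fin m → ℝ | (∀ i, z i ∈ Set.Icc (0:ℝ) 1)
            ∧ ∏ i, (z i) ^ (A i) < t / x ^ (a 0)} := by
        intro x hx
        have hx0 : 0 < x := lt_trans hs0 hx.1
        have hxa : 0 < x ^ (a 0) := Real.rpow_pos_of_pos hx0 _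
        ext z
        simp only [Set.mem_preimage, hT, Set.mem_setOf_eq]
        rw [lt_div_iff₀ hxa, mul_comm]
        exact ⟨fun h => ⟨h.2.1, h.2.2⟩, fun h => ⟨⟨hx0.le, hx.2.le⟩, h.1, h.2⟩⟩
      have htp_mem : ∀ x ∈ Set.Ioo s 1, 0 ≤ t / x ^ (a 0) ∧ t / x ^ (a 0) ≤ 1 := by
        intro x hx
        have hx0 : 0 < x := lt_trans hs0 hx.1
        have hxa : 0 < x ^ (a 0) := Real.rpow_pos_of_pos hx0 _
        constructor
        · positivity
        · rw [div_le_one hxa, ← hsa]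
          exact (Real.rpow_lt_rpow hs0.le hx.1 ha0).le
      set g : ℝ → ℝ := fun x => ∑ i, coefL A i * (t / x ^ (a 0)) ^ (1 / A i) with hg
      have hIH : ∀ x ∈ Set.Ioo s 1,
          volume {z : Fin m → ℝ | (∀ i, z i ∈ Set.Icc (0:ℝ) 1)
            ∧ ∏ i, (z i) ^ (A i) < t / x ^ (a 0)} = ENNReal.ofReal (g x) ∧ 0 ≤ g x := by
        intro x hx
        exact IH A haA hinjA _ (htp_mem x hx).1 (htp_mem x hx).2
      have hindic : (fun x : ℝ => volume (Prod.mk x ⁻¹' T))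
          = (Set.Icc (0:ℝ) 1).indicator (fun x => volume (Prod.mk x ⁻¹' T)) := by
        funext x
        by_cases hx : x ∈ Set.Icc (0:ℝ) 1
        · rw [Set.indicator_of_mem hx]
        · rw [Set.indicator_of_notMem hx, hslice_out x hx, measure_empty]
      have hpart1 : ∫⁻ x in Set.Ioc (0:ℝ) s, volume (Prod.mk x ⁻¹' T) = ENNReal.ofReal s := by
        rw [← Measure.restrict_congr_set Ioo_ae_eq_Ioc]
        have h1 : ∫⁻ x in Set.Ioo (0:ℝ) s, volume (Prod.mk x ⁻¹' T)
            = ∫⁻ y in Set.Ioo (0:ℝ) s, (1:ENNReal) :=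
          setLIntegral_congr_fun measurableSet_Ioo
            (fun x hx => by rw [hslice_lo x hx, volume_box])
        rw [h1, setLIntegral_one, Real.volume_Ioo, sub_zero]
      have hpart2 : ∫⁻ x in Set.Ioc s 1, volume (Prod.mk x ⁻¹' T)
          = ∫⁻ x in Set.Ioo s 1, ENNReal.ofReal (g x) := by
        rw [← Measure.restrict_congr_set Ioo_ae_eq_Ioc]
        exact setLIntegral_congr_fun measurableSet_Ioo
          (fun x hx => by rw [hslice_hi x hx]; exact (hIH x hx).1)
      have hint : volume T = ENNReal.ofReal s + ∫⁻ x in Set.Ioo s 1, ENNReal.ofReal (g x) := by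
        rw [MeasureTheory.Measure.volume_eq_prod, Measure.prod_apply hTm, hindic,
          lintegral_indicator measurableSet_Icc _,
          ← Measure.restrict_congr_set Ioc_ae_eq_Icc,
          ← Set.Ioc_union_Ioc_eq_Ioc hs0.le hs1,
          lintegral_union measurableSet_Ioc (Set.Ioc_disjoint_Ioc_of_le le_rfl),
          hpart1, hpart2]
      have hgcont : ContinuousOn g (Set.Icc s 1) := by
        apply continuousOn_finset_sum
        intro i _
        apply ContinuousOn.mul continuousOn_const
        apply ContinuousOn.rpow_const
        · exact continuousOn_const.div
            ((Real.continuous_rpow_const ha0.le).continuousOn)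
            (fun x hx => (Real.rpow_pos_of_pos (lt_of_lt_of_le hs0 hx.1) _).ne')
        · exact fun x hx => Or.inr (one_div_nonneg.mpr (haA i).le)
      have hgint : MeasureTheory.IntegrableOn g (Set.Ioo s 1) volume :=
        (hgcont.integrableOn_Icc).mono_set Set.Ioo_subset_Icc_self
      have hgnn : 0 ≤ᵐ[volume.restrict (Set.Ioo s 1)] g :=
        (ae_restrict_iff' measurableSet_Ioo).mpr
          (Filter.Eventually.of_forall fun x hx => (hIH x hx).2)
      have hof : ∫⁻ x in Set.Ioo s 1, ENNReal.ofReal (g x)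
          = ENNReal.ofReal (∫ x in Set.Ioo s 1, g x) :=
        (MeasureTheory.ofReal_integral_eq_lintegral_ofReal hgint hgnn).symm
      have hJ0 : 0 ≤ ∫ x in Set.Ioo s 1, g x :=
        MeasureTheory.setIntegral_nonneg measurableSet_Ioo fun x hx => (hIH x hx).2
      have h0mem : (0:ℝ) ∉ Set.uIcc s 1 := by
        rw [Set.uIcc_of_le hs1]
        exact fun h => absurd h.1 (not_le.mpr hs0)
      have hJval : ∫ x in Set.Ioo s 1, g x
          = ∑ i, coefL A i * t ^ (1 / A i) * ((1 - s ^ (1 - a 0 / A i)) / (1 - a 0 / A i)) := by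
        rw [← MeasureTheory.integral_Ioc_eq_integral_Ioo, ← intervalIntegral.integral_of_le hs1]
        have heq : Set.EqOn g
            (fun x => ∑ i, coefL A i * t ^ (1 / A i) * x ^ (-(a 0 / A i))) (Set.uIcc s 1) := by
          intro x hx
          rw [Set.uIcc_of_le hs1] at hx
          have hx0 : 0 < x := lt_of_lt_of_le hs0 hx.1
          simp only [hg]
          refine Finset.sum_congr rfl fun i _ => ?_
          have h1 : (t / x ^ (a 0)) ^ (1 / A i) = t ^ (1 / A i) / (x ^ (a 0)) ^ (1 / A i) :=
            Real.div_rpow ht0 (Real.rpow_nonneg hx0.le _) _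
          have h2 : (x ^ (a 0)) ^ (1 / A i) = x ^ (a 0 / A i) := by
            rw [← Real.rpow_mul hx0.le, mul_one_div]
          have h3 : x ^ (-(a 0 / A i)) = (x ^ (a 0 / A i))⁻¹ := Real.rpow_neg hx0.le _
          rw [h1, h2, div_eq_mul_inv, ← h3, mul_assoc]
        rw [intervalIntegral.integral_congr heq]
        rw [intervalIntegral.integral_finset_sum
          (fun i _ => (intervalIntegral.intervalIntegrable_rpow (Or.inr h0mem)).const_mul _)]
        refine Finset.sum_congr rfl fun i _ => ?_
        have hAne : A i ≠ a 0 := fun h => Fin.succ_ne_zero i (hinj h)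
        have hne : -(a 0 / A i) ≠ -1 := by
          intro h
          have h' : a 0 / A i = 1 := by linarith [neg_injective h]
          exact hAne (((div_eq_one_iff_eq (haA i).ne').mp h')).symm
        rw [intervalIntegral.integral_const_mul, integral_rpow (Or.inr ⟨hne, h0mem⟩)]
        have hr : -(a 0 / A i) + 1 = 1 - a 0 / A i := by ring
        rw [hr, Real.one_rpow]
      have hterm : ∀ i : Fin m,
          coefL A i * t ^ (1 / A i) * ((1 - s ^ (1 - a 0 / A i)) / (1 - a 0 / A i))
            = coefL a i.succ * t ^ (1 / A i) - coefL a i.succ * s := by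
        intro i
        have hAi := haA i
        have hAne : A i ≠ a 0 := fun h => Fin.succ_ne_zero i (hinj h)
        have hsub : A i - a 0 ≠ 0 := sub_ne_zero.mpr hAne
        have hD : 1 - a 0 / A i = (A i - a 0) / A i := by field_simp
        have hkey : t ^ (1 / A i) * s ^ (1 - a 0 / A i) = s := by
          rw [hs, ← Real.rpow_mul ht0, ← Real.rpow_add htpos]
          congr 1
          field_simp
          ring
        have hc : coefL a i.succ = (A i / (A i - a 0)) * coefL A i := coefL_succ a i
        calc coefL A i * t ^ (1 / A i) * ((1 - s ^ (1 - a 0 / A i)) / (1 - a 0 / A i))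
            = coefL A i * (t ^ (1 / A i) - t ^ (1 / A i) * s ^ (1 - a 0 / A i))
              / (1 - a 0 / A i) := by ring
          _ = coefL A i * (t ^ (1 / A i) - s) / ((A i - a 0) / A i) := by rw [hkey, hD]
          _ = coefL a i.succ * t ^ (1 / A i) - coefL a i.succ * s := by
              rw [hc]
              field_simp
      have hsum1 : ∑ i : Fin (m+1), coefL a i = 1 := sum_coefL_eq_one (Nat.succ_ne_zero m) a hinj
      have hreal : s + ∫ x in Set.Ioo s 1, g x = ∑ i, coefL a i * t ^ (1 / a i) := by
        rw [hJval, Finset.sum_congr rfl fun i _ => hterm i, Finset.sum_sub_distrib,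
          ← Finset.sum_mul]
        rw [Fin.sum_univ_succ (f := fun i => coefL a i * t ^ (1 / a i))]
        rw [Fin.sum_univ_succ (f := fun i => coefL a i)] at hsum1
        have hc0 : coefL a 0 = 1 - ∑ i : Fin m, coefL a i.succ := by linarith
        rw [hc0]
        simp only [hA]
        rw [hs]
        ring
      constructor
      · rw [hvol, hint, hof, ← ENNReal.ofReal_add hs0.le hJ0, hreal]
      · rw [← hreal]
        linarith

/-- for pairwise distinct positive `a₁,…,aₘ` and positive `b₁,…,bₙ`,
`f(a₁,…,aₘ; b₁,…,bₙ) = Σᵢ (∏_{k≠i} aᵢ/(aᵢ − aₖ)) · (∏ⱼ aᵢ/(aᵢ + bⱼ))`. -/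
theorem stmt14 (m n : ℕ) (a : Fin m → ℝ) (b : Fin n → ℝ)
    (ha : ∀ i, 0 < a i) (hb : ∀ j, 0 < b j) (hdist : Function.Injective a) :
    hypervolume m n a b
      = ∑ i, (∏ k ∈ Finset.univ.erase i, a i / (a i - a k)) * ∏ j, a i / (a i + b j) := by
  classical
  set U : Set ((Fin m → ℝ) × (Fin n → ℝ)) := {z : (Fin m → ℝ) × (Fin n → ℝ) |
    (∀ i, z.1 i ∈ Set.Icc (0 : ℝ) 1) ∧ (∀ j, z.2 j ∈ Set.Icc (0 : ℝ) 1) ∧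
    ∏ i, (z.1 i) ^ (a i) < ∏ j, (z.2 j) ^ (b j)} with hU
  have hUm : MeasurableSet U := by
    have h1 : MeasurableSet {z : (Fin m → ℝ) × (Fin n → ℝ) | ∀ i, z.1 i ∈ Set.Icc (0:ℝ) 1} :=
      measurable_fst (measurableSet_box m)
    have h2 : MeasurableSet {z : (Fin m → ℝ) × (Fin n → ℝ) | ∀ j, z.2 j ∈ Set.Icc (0:ℝ) 1} :=
      measurable_snd (measurableSet_box n)
    have h3 : MeasurableSet {z : (Fin m → ℝ) × (Fin n → ℝ) |
        ∏ i, (z.1 i) ^ (a i) < ∏ j, (z.2 j) ^ (b j)} :=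
      measurableSet_lt
        (((continuous_prodRpow a ha).comp continuous_fst).measurable)
        (((continuous_prodRpow b hb).comp continuous_snd).measurable)
    exact h1.inter (h2.inter h3)
  set P : (Fin n → ℝ) → ℝ := fun y => ∏ j, (y j) ^ (b j) with hP
  set F : (Fin n → ℝ) → ℝ := fun y => ∑ i, coefL a i * (P y) ^ (1 / a i) with hF
  have hbox_mem : ∀ y : Fin n → ℝ, (∀ j, y j ∈ Set.Icc (0:ℝ) 1) → 0 ≤ P y ∧ P y ≤ 1 :=
    fun y hy => ⟨prod_rpow_nonneg b y hy, prod_rpow_le_one b hb y hy⟩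
  have hslice : ∀ y : Fin n → ℝ, volume ((fun x => (x, y)) ⁻¹' U)
      = Set.indicator {y : Fin n → ℝ | ∀ j, y j ∈ Set.Icc (0:ℝ) 1}
          (fun y => ENNReal.ofReal (F y)) y := by
    intro y
    by_cases hy : ∀ j, y j ∈ Set.Icc (0:ℝ) 1
    · rw [Set.indicator_of_mem (show y ∈ {y : Fin n → ℝ | ∀ j, y j ∈ Set.Icc (0:ℝ) 1} from hy)]
      have hset : (fun x => (x, y)) ⁻¹' U
          = {x : Fin m → ℝ | (∀ i, x i ∈ Set.Icc (0:ℝ) 1) ∧ ∏ i, (x i) ^ (a i) < P y} := by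
        ext x
        simp only [Set.mem_preimage, hU, Set.mem_setOf_eq, hP]
        tauto
      rw [hset]
      exact (slice_volume m a ha hdist (P y) (hbox_mem y hy).1 (hbox_mem y hy).2).1
    · rw [Set.indicator_of_notMem (show y ∉ {y : Fin n → ℝ | ∀ j, y j ∈ Set.Icc (0:ℝ) 1} from hy)]
      have hset : (fun x => (x, y)) ⁻¹' U = ∅ := by
        ext x
        simp only [Set.mem_preimage, hU, Set.mem_setOf_eq, Set.mem_empty_iff_false, iff_false]
        intro h
        exact hy h.2.1
      rw [hset, measure_empty]
  have hFnn : ∀ y ∈ {y : Fin n → ℝ | ∀ j, y j ∈ Set.Icc (0:ℝ) 1}, 0 ≤ F y := fun y hy =>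
    (slice_volume m a ha hdist (P y) (hbox_mem y hy).1 (hbox_mem y hy).2).2
  have hFcont : Continuous F := by
    apply continuous_finset_sum
    intro i _
    exact continuous_const.mul
      ((Real.continuous_rpow_const (one_div_nonneg.mpr (ha i).le)).comp
        (continuous_prodRpow b hb))
  have hcompact : IsCompact {y : Fin n → ℝ | ∀ j, y j ∈ Set.Icc (0:ℝ) 1} := by
    rw [box_eq]
    exact isCompact_univ_pi fun _ => isCompact_Icc
  have hFint : MeasureTheory.IntegrableOn F {y : Fin n → ℝ | ∀ j, y j ∈ Set.Icc (0:ℝ) 1} volume :=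
    hFcont.continuousOn.integrableOn_compact hcompact
  have hvolU : volume U
      = ENNReal.ofReal (∫ y in {y : Fin n → ℝ | ∀ j, y j ∈ Set.Icc (0:ℝ) 1}, F y) := by
    rw [MeasureTheory.Measure.volume_eq_prod, Measure.prod_apply_symm hUm,
      lintegral_congr hslice, lintegral_indicator (measurableSet_box n) _,
      ← MeasureTheory.ofReal_integral_eq_lintegral_ofReal hFint
        ((ae_restrict_iff' (measurableSet_box n)).mpr (Filter.Eventually.of_forall hFnn))]
  have hI0 : 0 ≤ ∫ y in {y : Fin n → ℝ | ∀ j, y j ∈ Set.Icc (0:ℝ) 1}, F y :=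
    MeasureTheory.setIntegral_nonneg (measurableSet_box n) hFnn
  have hone : ∀ i : Fin m, ∫ y in {y : Fin n → ℝ | ∀ j, y j ∈ Set.Icc (0:ℝ) 1},
      (P y) ^ (1 / a i) = ∏ j, a i / (a i + b j) := by
    intro i
    have hEq : Set.EqOn (fun y => (P y) ^ (1 / a i))
        (fun y : Fin n → ℝ => ∏ j, (y j) ^ (b j / a i))
        {y : Fin n → ℝ | ∀ j, y j ∈ Set.Icc (0:ℝ) 1} := by
      intro y hy
      simp only [hP]
      rw [← Real.finset_prod_rpow _ _ (fun j _ => Real.rpow_nonneg (hy j).1 _) _]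
      refine Finset.prod_congr rfl fun j _ => ?_
      rw [← Real.rpow_mul (hy j).1, mul_one_div]
    rw [MeasureTheory.setIntegral_congr_fun (measurableSet_box n) hEq]
    have hind : ∫ y in {y : Fin n → ℝ | ∀ j, y j ∈ Set.Icc (0:ℝ) 1},
        ∏ j, (y j) ^ (b j / a i)
        = ∫ y : Fin n → ℝ, ∏ j, (Set.Icc (0:ℝ) 1).indicator
            (fun u => u ^ (b j / a i)) (y j) := by
      rw [← MeasureTheory.integral_indicator (measurableSet_box n)]
      congr 1
      funext y
      by_cases hy : y ∈ {y : Fin n → ℝ | ∀ j, y j ∈ Set.Icc (0:ℝ) 1}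
      · rw [Set.indicator_of_mem hy]
        exact (Finset.prod_congr rfl fun j _ => Set.indicator_of_mem (hy j) (fun u : ℝ => u ^ (b j / a i))).symm
      · rw [Set.indicator_of_notMem hy]
        simp only [Set.mem_setOf_eq, not_forall] at hy
        obtain ⟨j, hj⟩ := hy
        exact (Finset.prod_eq_zero (Finset.mem_univ j) (Set.indicator_of_notMem hj _)).symm
    rw [hind, MeasureTheory.integral_fintype_prod_volume_eq_prod
      (f := fun j u => (Set.Icc (0:ℝ) 1).indicator (fun v => v ^ (b j / a i)) u)]
    refine Finset.prod_congr rfl fun j _ => ?_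
    have hq : (0:ℝ) < b j / a i := div_pos (hb j) (ha i)
    rw [MeasureTheory.integral_indicator measurableSet_Icc,
      MeasureTheory.integral_Icc_eq_integral_Ioc,
      ← intervalIntegral.integral_of_le zero_le_one,
      integral_rpow (Or.inl (by linarith))]
    rw [Real.one_rpow, Real.zero_rpow (by positivity), sub_zero]
    have hden : b j / a i + 1 = (a i + b j) / a i := by
      rw [add_div, div_self (ha i).ne', add_comm]
    rw [hden, one_div_div]
  have hIval : ∫ y in {y : Fin n → ℝ | ∀ j, y j ∈ Set.Icc (0:ℝ) 1}, F y
      = ∑ i, coefL a i * ∏ j, a i / (a i + b j) := by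
    simp only [hF]
    rw [MeasureTheory.integral_finset_sum]
    · refine Finset.sum_congr rfl fun i _ => ?_
      rw [MeasureTheory.integral_const_mul, hone i]
    · intro i _
      apply MeasureTheory.Integrable.const_mul
      refine (Continuous.continuousOn ?_).integrableOn_compact hcompact
      exact (Real.continuous_rpow_const (one_div_nonneg.mpr (ha i).le)).comp
        (continuous_prodRpow b hb)
  unfold hypervolume
  rw [← hU, hvolU, hIval, ENNReal.toReal_ofReal (hIval ▸ hI0)]
  rfl
end

section
/- For positive integers m and n, the Lebesgue measure of the set {(x,y) ∈ [0,1]ᵐ × [0,1]ⁿ : x₁x₂⋯xₘ < y₁y₂⋯yₙ} equals Σ_{i=0}^{m−1} C(n+i−1, i) · 2^{−(n+i)}, where C denotes the binomial coefficient. -/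
open scoped ENNReal


open MeasureTheory Finset


lemma measurable_consfun {α : Type*} [MeasurableSpace α] {k : ℕ} :
    Measurable (fun p : ℝ × ((Fin k → ℝ) × α) =>
      ((Fin.cons p.1 p.2.1 : Fin (k+1) → ℝ), p.2.2)) := by
  refine Measurable.prodMk ?_ (measurable_snd.comp measurable_snd)
  apply measurable_pi_lambda
  intro i
  refine Fin.cases ?_ ?_ i
  · simp only [Fin.cons_zero]; exact measurable_fst
  · intro j; simp only [Fin.cons_succ]
    exact (measurable_fst.comp measurable_snd).eval

lemma peel {α : Type*} [MeasureSpace α] [SigmaFinite (volume : Measure α)]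
    {k : ℕ} (S : Set ((Fin (k+1) → ℝ) × α)) (hS : MeasurableSet S) :
    volume S = ∫⁻ t : ℝ, volume {w : (Fin k → ℝ) × α |
      ((Fin.cons t w.1 : Fin (k+1) → ℝ), w.2) ∈ S} := by
  set T : Set (ℝ × ((Fin k → ℝ) × α)) :=
    {p : ℝ × ((Fin k → ℝ) × α) | ((Fin.cons p.1 p.2.1 : Fin (k+1) → ℝ), p.2.2) ∈ S} with hT
  have hTm : MeasurableSet T := measurable_consfun hS
  let e1 : (Fin (k+1) → ℝ) ≃ᵐ ℝ × (Fin k → ℝ) :=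
    MeasurableEquiv.piFinSuccAbove (fun _ => ℝ) 0
  let e : ((Fin (k+1) → ℝ) × α) ≃ᵐ ℝ × ((Fin k → ℝ) × α) :=
    (e1.prodCongr (MeasurableEquiv.refl α)).trans MeasurableEquiv.prodAssoc
  have mp : MeasurePreserving e volume volume := by
    have h1 : MeasurePreserving e1 volume volume :=
      volume_preserving_piFinSuccAbove (fun _ => ℝ) 0
    have h2 := (h1.prod (MeasurePreserving.id (volume : Measure α)))
    have h3 := (MeasureTheory.volume_preserving_prodAssoc
      (α₁ := ℝ) (β₁ := Fin k → ℝ) (γ₁ := α))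
    have h4 : MeasurePreserving (Prod.map ⇑e1 (id : α → α)) volume volume := h2
    exact h3.comp h4
  have hpre : e ⁻¹' T = S := by
    ext z
    have he : (e z : ℝ × ((Fin k → ℝ) × α))
        = (z.1 0, ((fun i => z.1 ((0:Fin (k+1)).succAbove i)), z.2)) := rfl
    simp only [Set.mem_preimage, he, hT, Set.mem_setOf_eq]
    have hc : (Fin.cons (z.1 0) (fun i => z.1 ((0 : Fin (k+1)).succAbove i))
        : Fin (k+1) → ℝ) = z.1 := by
      funext i
      refine Fin.cases ?_ ?_ i
      · simp
      · intro j; simp [Fin.succAbove_zero]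
    rw [hc]
  calc volume S = volume (e ⁻¹' T) := by rw [hpre]
    _ = volume T := mp.measure_preimage hTm.nullMeasurableSet
    _ = ∫⁻ t : ℝ, volume (Prod.mk t ⁻¹' T) := by
        rw [Measure.volume_eq_prod (α := ℝ), Measure.prod_apply hTm]
    _ = _ := rfl

noncomputable def HH (k l : ℕ) (r : ℝ) : ℝ≥0∞ :=
  volume {z : (Fin k → ℝ) × (Fin l → ℝ) |
    (∀ i, z.1 i ∈ Set.Icc (0:ℝ) 1) ∧ (∀ j, z.2 j ∈ Set.Icc (0:ℝ) 1) ∧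
    ∏ i, z.1 i < r * ∏ j, z.2 j}

noncomputable def GG (l k : ℕ) (r : ℝ) : ℝ≥0∞ :=
  volume {w : (Fin l → ℝ) × (Fin k → ℝ) |
    (∀ j, w.1 j ∈ Set.Icc (0:ℝ) 1) ∧ (∀ i, w.2 i ∈ Set.Icc (0:ℝ) 1) ∧
    ∏ i, w.2 i < r * ∏ j, w.1 j}

lemma HHmono (k l : ℕ) : Monotone (HH k l) := by
  intro r r' h
  apply measure_mono
  rintro z ⟨h1, h2, h3⟩
  refine ⟨h1, h2, h3.trans_le ?_⟩
  exact mul_le_mul_of_nonneg_right h (Finset.prod_nonneg fun j _ => (h2 j).1)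

lemma HHmeas (k l : ℕ) : Measurable (HH k l) := (HHmono k l).measurable

lemma HHset_meas (k l : ℕ) (r : ℝ) :
    MeasurableSet {z : (Fin k → ℝ) × (Fin l → ℝ) |
    (∀ i, z.1 i ∈ Set.Icc (0:ℝ) 1) ∧ (∀ j, z.2 j ∈ Set.Icc (0:ℝ) 1) ∧
    ∏ i, z.1 i < r * ∏ j, z.2 j} := by
  simp only [Set.setOf_and]
  refine MeasurableSet.inter ?_ (MeasurableSet.inter ?_ ?_)
  · rw [Set.setOf_forall]
    exact MeasurableSet.iInter fun i =>
      (measurableSet_Icc.preimage measurable_fst.eval)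
  · rw [Set.setOf_forall]
    exact MeasurableSet.iInter fun j =>
      (measurableSet_Icc.preimage measurable_snd.eval)
  · exact measurableSet_lt (by fun_prop) (by fun_prop)

lemma GGset_meas (l k : ℕ) (r : ℝ) :
    MeasurableSet {w : (Fin l → ℝ) × (Fin k → ℝ) |
    (∀ j, w.1 j ∈ Set.Icc (0:ℝ) 1) ∧ (∀ i, w.2 i ∈ Set.Icc (0:ℝ) 1) ∧
    ∏ i, w.2 i < r * ∏ j, w.1 j} := by
  simp only [Set.setOf_and]
  refine MeasurableSet.inter ?_ (MeasurableSet.inter ?_ ?_)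
  · rw [Set.setOf_forall]
    exact MeasurableSet.iInter fun i =>
      (measurableSet_Icc.preimage measurable_fst.eval)
  · rw [Set.setOf_forall]
    exact MeasurableSet.iInter fun j =>
      (measurableSet_Icc.preimage measurable_snd.eval)
  · exact measurableSet_lt (by fun_prop) (by fun_prop)

lemma HH_eq_GG (k l : ℕ) (r : ℝ) : HH k l r = GG l k r := by
  rw [HH, GG]
  have mp : MeasurePreserving (Prod.swap : (Fin l → ℝ) × (Fin k → ℝ) → _)
      volume volume := by
    rw [Measure.volume_eq_prod, Measure.volume_eq_prod]
    exact Measure.measurePreserving_swap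
  rw [← mp.measure_preimage (HHset_meas k l r).nullMeasurableSet]
  congr 1
  ext w
  simp only [Set.mem_preimage, Set.mem_setOf_eq, Prod.fst_swap, Prod.snd_swap]
  tauto

lemma P1 (k l : ℕ) (r : ℝ) :
    HH (k+1) l r = ∫⁻ t in Set.Ioo (0:ℝ) 1, HH k l (r / t) := by
  rw [HH, peel _ (HHset_meas (k+1) l r)]
  have step1 : (fun t : ℝ => volume {w : (Fin k → ℝ) × (Fin l → ℝ) |
      ((Fin.cons t w.1 : Fin (k+1) → ℝ), w.2) ∈
        {z : (Fin (k+1) → ℝ) × (Fin l → ℝ) |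
          (∀ i, z.1 i ∈ Set.Icc (0:ℝ) 1) ∧ (∀ j, z.2 j ∈ Set.Icc (0:ℝ) 1) ∧
          ∏ i, z.1 i < r * ∏ j, z.2 j}})
      = fun t : ℝ => (Set.Icc (0:ℝ) 1).indicator (fun t =>
          volume {w : (Fin k → ℝ) × (Fin l → ℝ) |
            (∀ i, w.1 i ∈ Set.Icc (0:ℝ) 1) ∧ (∀ j, w.2 j ∈ Set.Icc (0:ℝ) 1) ∧
            t * ∏ i, w.1 i < r * ∏ j, w.2 j}) t := by
    funext t
    by_cases ht : t ∈ Set.Icc (0:ℝ) 1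
    · rw [Set.indicator_of_mem ht]
      congr 1
      ext w
      simp only [Set.mem_setOf_eq, Fin.forall_fin_succ, Fin.cons_zero, Fin.cons_succ,
        Fin.prod_univ_succ, ht, true_and]
    · rw [Set.indicator_of_notMem ht]
      convert measure_empty
      · ext w
        simp only [Set.mem_setOf_eq, Fin.forall_fin_succ, Fin.cons_zero, Fin.cons_succ,
          Set.mem_empty_iff_false, iff_false]
        rintro ⟨⟨h0, -⟩, -⟩
        exact ht h0
      · infer_instance
  rw [step1, lintegral_indicator measurableSet_Icc, ← setLIntegral_congr Ioo_ae_eq_Icc]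
  · refine setLIntegral_congr_fun measurableSet_Ioo ?_
    intro t ht
    beta_reduce
    rw [HH]
    congr 1
    ext w
    simp only [Set.mem_setOf_eq]
    refine and_congr_right fun _ => and_congr_right fun h2 => ?_
    rw [div_mul_eq_mul_div, lt_div_iff₀ ht.1, mul_comm]

lemma P2G (l k : ℕ) (r : ℝ) :
    GG (l+1) k r = ∫⁻ t in Set.Ioo (0:ℝ) 1, GG l k (r * t) := by
  rw [GG, peel _ (GGset_meas (l+1) k r)]
  have step1 : (fun t : ℝ => volume {w : (Fin l → ℝ) × (Fin k → ℝ) |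
      ((Fin.cons t w.1 : Fin (l+1) → ℝ), w.2) ∈
        {z : (Fin (l+1) → ℝ) × (Fin k → ℝ) |
          (∀ j, z.1 j ∈ Set.Icc (0:ℝ) 1) ∧ (∀ i, z.2 i ∈ Set.Icc (0:ℝ) 1) ∧
          ∏ i, z.2 i < r * ∏ j, z.1 j}})
      = fun t : ℝ => (Set.Icc (0:ℝ) 1).indicator (fun t =>
          volume {w : (Fin l → ℝ) × (Fin k → ℝ) |
            (∀ j, w.1 j ∈ Set.Icc (0:ℝ) 1) ∧ (∀ i, w.2 i ∈ Set.Icc (0:ℝ) 1) ∧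
            ∏ i, w.2 i < (r * t) * ∏ j, w.1 j}) t := by
    funext t
    by_cases ht : t ∈ Set.Icc (0:ℝ) 1
    · rw [Set.indicator_of_mem ht]
      congr 1
      ext w
      simp only [Set.mem_setOf_eq, Fin.forall_fin_succ, Fin.cons_zero, Fin.cons_succ,
        Fin.prod_univ_succ, ht, true_and]
      rw [mul_assoc]
    · rw [Set.indicator_of_notMem ht]
      convert measure_empty
      · ext w
        simp only [Set.mem_setOf_eq, Fin.forall_fin_succ, Fin.cons_zero, Fin.cons_succ,
          Set.mem_empty_iff_false, iff_false]
        rintro ⟨⟨h0, -⟩, -⟩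
        exact ht h0
      · infer_instance
  rw [step1, lintegral_indicator measurableSet_Icc, ← setLIntegral_congr Ioo_ae_eq_Icc]
  rfl

lemma P2 (k l : ℕ) (r : ℝ) :
    HH k (l+1) r = ∫⁻ t in Set.Ioo (0:ℝ) 1, HH k l (r * t) := by
  rw [HH_eq_GG, P2G]
  refine setLIntegral_congr_fun measurableSet_Ioo ?_
  intro t ht
  beta_reduce
  rw [HH_eq_GG]

lemma HH_zero_left (n : ℕ) : HH 0 n 1 = 0 := by
  rw [HH]
  convert measure_empty
  · ext z
    simp only [Set.mem_setOf_eq, Set.mem_empty_iff_false, iff_false]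
    rintro ⟨-, h2, h3⟩
    have hle : ∏ j, z.2 j ≤ 1 :=
      Finset.prod_le_one (fun j _ => (h2 j).1) (fun j _ => (h2 j).2)
    have : (1:ℝ) < ∏ j, z.2 j := by simpa using h3
    linarith
  · infer_instance

lemma HH_zero_right (m : ℕ) (hm : 0 < m) : HH m 0 1 = 1 := by
  have hU : volume ((Set.univ.pi fun _ : Fin m => Set.Icc (0:ℝ) 1) ×ˢ
      (Set.univ : Set (Fin 0 → ℝ))) = 1 := by
    rw [Measure.volume_eq_prod, Measure.prod_prod]
    have h0 : volume ((Set.univ : Set (Fin 0 → ℝ))) = 1 := by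
      rw [volume_pi, Measure.pi_univ]; simp
    rw [h0, mul_one, Set.pi_univ_Icc, Real.volume_Icc_pi]; simp
  have hL : volume ((Set.univ.pi fun _ : Fin m => Set.Ico (0:ℝ) 1) ×ˢ
      (Set.univ : Set (Fin 0 → ℝ))) = 1 := by
    rw [Measure.volume_eq_prod, Measure.prod_prod]
    have h0 : volume ((Set.univ : Set (Fin 0 → ℝ))) = 1 := by
      rw [volume_pi, Measure.pi_univ]; simp
    rw [h0, mul_one, Real.volume_pi_Ico]; simp
  rw [HH]
  apply le_antisymm
  · rw [← hU]
    apply measure_mono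
    rintro z ⟨h1, -, -⟩
    exact ⟨by intro i _; exact h1 i, trivial⟩
  · rw [← hL]
    apply measure_mono
    rintro z hz
    simp only [Set.mem_prod, Set.mem_pi, Set.mem_univ, forall_true_left] at hz
    obtain ⟨h1, -⟩ := hz
    refine ⟨fun i => ⟨(h1 i).1, le_of_lt (h1 i).2⟩, fun j => j.elim0, ?_⟩
    have i0 : Fin m := ⟨0, hm⟩
    have h2 : ∏ i, z.1 i < 1 := by
      have he : ∏ i ∈ Finset.univ.erase i0, z.1 i ≤ 1 :=
        Finset.prod_le_one (fun j _ => (h1 j).1) (fun j _ => (h1 j).2.le)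
      have he0 : (0:ℝ) ≤ ∏ i ∈ Finset.univ.erase i0, z.1 i :=
        Finset.prod_nonneg fun j _ => (h1 j).1
      calc ∏ i, z.1 i = z.1 i0 * ∏ i ∈ Finset.univ.erase i0, z.1 i :=
            (Finset.mul_prod_erase _ _ (Finset.mem_univ i0)).symm
        _ ≤ z.1 i0 * 1 := mul_le_mul_of_nonneg_left he (h1 i0).1
        _ < 1 := by rw [mul_one]; exact (h1 i0).2
    simpa using h2

lemma lint_half : ∫⁻ a in Set.Ioo (0:ℝ) 1, ENNReal.ofReal a = 2⁻¹ := by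
  have h1 : IntegrableOn id (Set.Ioo (0:ℝ) 1) volume :=
    (continuous_id.integrableOn_Icc (a := (0:ℝ)) (b := 1)).mono_set Set.Ioo_subset_Icc_self
  have h2 : ∫ a in Set.Ioo (0:ℝ) 1, a = 1/2 := by
    rw [← MeasureTheory.integral_Ioc_eq_integral_Ioo,
      ← intervalIntegral.integral_of_le zero_le_one]
    simpa using intervalIntegral.integral_id (a := (0:ℝ)) (b := 1)
  have h4 : (fun _ : ℝ => (0:ℝ)) ≤ᵐ[volume.restrict (Set.Ioo (0:ℝ) 1)] id := by
    filter_upwards [ae_restrict_mem measurableSet_Ioo] with x hx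
    exact hx.1.le
  have h3 := MeasureTheory.ofReal_integral_eq_lintegral_ofReal h1 h4
  simp only [id] at h3
  rw [h2] at h3
  rw [← h3]
  rw [show (1/2:ℝ) = (2:ℝ)⁻¹ by norm_num,
    ENNReal.ofReal_inv_of_pos two_pos, ENNReal.ofReal_ofNat]

lemma sub1 (g : ℝ → ℝ≥0∞) (hg : Measurable g) {a : ℝ} (ha : 0 < a) :
    ∫⁻ b in Set.Ioo 0 a, g (b / a) = ENNReal.ofReal a * ∫⁻ u in Set.Ioo 0 1, g u := by
  set F : ℝ → ℝ≥0∞ := (Set.Ioo (0:ℝ) a).indicator (fun b => g (b/a)) with hF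
  have hFm : Measurable F :=
    ((hg.comp (measurable_id.div_const a)).indicator measurableSet_Ioo)
  have hmap : Measure.map (fun u : ℝ => a * u) volume
      = ENNReal.ofReal |a⁻¹| • volume := Real.map_volume_mul_left (ne_of_gt ha)
  have key : ENNReal.ofReal |a⁻¹| * ∫⁻ b, F b = ∫⁻ u in Set.Ioo (0:ℝ) 1, g u := by
    rw [← smul_eq_mul, ← lintegral_smul_measure, ← hmap,
      lintegral_map hFm (measurable_const_mul a)]
    rw [← lintegral_indicator measurableSet_Ioo]
    congr 1
    funext u
    by_cases hu : u ∈ Set.Ioo (0:ℝ) 1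
    · have hmem : a * u ∈ Set.Ioo 0 a := by
        constructor
        · exact mul_pos ha hu.1
        · nlinarith [hu.2, ha]
      rw [hF]
      simp only [Set.indicator_of_mem hmem, Set.indicator_of_mem hu]
      congr 1
      field_simp
    · have hmem : a * u ∉ Set.Ioo 0 a := by
        intro hc
        apply hu
        constructor
        · nlinarith [hc.1]
        · nlinarith [hc.2]
      rw [hF]
      simp only [Set.indicator_of_notMem hmem, Set.indicator_of_notMem hu]
  have habs : |a⁻¹| = a⁻¹ := abs_of_pos (inv_pos.mpr ha)
  have hcancel : ENNReal.ofReal a * ENNReal.ofReal a⁻¹ = 1 := by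
    rw [← ENNReal.ofReal_mul ha.le, mul_inv_cancel₀ (ne_of_gt ha)]
    exact ENNReal.ofReal_one
  calc ∫⁻ b in Set.Ioo 0 a, g (b / a) = ∫⁻ b, F b := by
        rw [hF, lintegral_indicator measurableSet_Ioo]
    _ = (ENNReal.ofReal a * ENNReal.ofReal a⁻¹) * ∫⁻ b, F b := by rw [hcancel, one_mul]
    _ = ENNReal.ofReal a * (ENNReal.ofReal |a⁻¹| * ∫⁻ b, F b) := by rw [habs, mul_assoc]
    _ = ENNReal.ofReal a * ∫⁻ u in Set.Ioo (0:ℝ) 1, g u := by rw [key]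

lemma HH_le_one (k l : ℕ) (r : ℝ) : HH k l r ≤ 1 := by
  rw [HH]
  have hU : volume ((Set.univ.pi fun _ : Fin k => Set.Icc (0:ℝ) 1) ×ˢ
      (Set.univ.pi fun _ : Fin l => Set.Icc (0:ℝ) 1)) = 1 := by
    rw [Measure.volume_eq_prod, Measure.prod_prod]
    rw [Set.pi_univ_Icc, Set.pi_univ_Icc, Real.volume_Icc_pi, Real.volume_Icc_pi]
    simp
  rw [← hU]
  apply measure_mono
  rintro z ⟨h1, h2, -⟩
  exact ⟨fun i _ => h1 i, fun j _ => h2 j⟩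

lemma recurrence (k l : ℕ) :
    HH (k+1) (l+1) 1 = 2⁻¹ * HH k (l+1) 1 + 2⁻¹ * HH (k+1) l 1 := by
  have hK : Measurable (HH k l) := HHmeas k l
  set C1 := HH k (l+1) 1 with hC1def
  set C2 := HH (k+1) l 1 with hC2def
  have hC1 : ∫⁻ u in Set.Ioo (0:ℝ) 1, HH k l u = C1 := by
    rw [hC1def, P2 k l 1]
    refine setLIntegral_congr_fun measurableSet_Ioo ?_
    intro t ht
    beta_reduce
    rw [one_mul]
  have hC2 : ∫⁻ u in Set.Ioo (0:ℝ) 1, HH k l u⁻¹ = C2 := by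
    rw [hC2def, P1 k l 1]
    refine setLIntegral_congr_fun measurableSet_Ioo ?_
    intro t ht
    beta_reduce
    rw [one_div]
  set R : Set (ℝ × ℝ) := {p : ℝ × ℝ | 0 < p.1 ∧ p.1 ≤ p.2 ∧ p.2 < 1} with hR
  have hRm : MeasurableSet R := by
    apply MeasurableSet.inter (measurableSet_lt measurable_const measurable_fst)
    exact MeasurableSet.inter (measurableSet_le measurable_fst measurable_snd)
      (measurableSet_lt measurable_snd measurable_const)
  set F2 : ℝ × ℝ → ℝ≥0∞ := R.indicator (fun p => HH k l (p.2 / p.1)) with hF2def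
  set F3 : ℝ × ℝ → ℝ≥0∞ := R.indicator (fun p => HH k l (p.1 / p.2)) with hF3def
  have hF2 : Measurable F2 :=
    (hK.comp (measurable_snd.div measurable_fst)).indicator hRm
  have hF3 : Measurable F3 :=
    (hK.comp (measurable_fst.div measurable_snd)).indicator hRm
  -- Step A
  have stepA : HH (k+1) (l+1) 1
      = ∫⁻ a in Set.Ioo (0:ℝ) 1, ∫⁻ b in Set.Ioo (0:ℝ) 1, HH k l (b / a) := by
    rw [P1]
    refine setLIntegral_congr_fun measurableSet_Ioo ?_
    intro a ha
    beta_reduce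
    rw [P2]
    refine setLIntegral_congr_fun measurableSet_Ioo ?_
    intro b hb
    beta_reduce
    rw [div_mul_eq_mul_div, one_mul]
  have stepB : HH (k+1) (l+1) 1
      = ∫⁻ b in Set.Ioo (0:ℝ) 1, ∫⁻ a in Set.Ioo (0:ℝ) 1, HH k l (b / a) := by
    rw [P2]
    refine setLIntegral_congr_fun measurableSet_Ioo ?_
    intro b hb
    beta_reduce
    rw [one_mul, P1]
  -- pointwise descriptions of inner integrals
  have hf2slice : ∀ a : ℝ, (∫⁻ b, F2 (a, b))
      = (Set.Ioo (0:ℝ) 1).indicator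
          (fun a => ∫⁻ b in Set.Ico a 1, HH k l (b / a)) a := by
    intro a
    by_cases ha : a ∈ Set.Ioo (0:ℝ) 1
    · rw [Set.indicator_of_mem ha, ← lintegral_indicator measurableSet_Ico]
      congr 1
      funext b
      by_cases hb : b ∈ Set.Ico a 1
      · rw [Set.indicator_of_mem hb, hF2def,
          Set.indicator_of_mem (by exact ⟨ha.1, hb.1, hb.2⟩)]
      · rw [Set.indicator_of_notMem hb, hF2def, Set.indicator_of_notMem]
        rintro ⟨-, h1, h2⟩
        exact hb ⟨h1, h2⟩
    · rw [Set.indicator_of_notMem ha]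
      have : ∀ b, F2 (a, b) = 0 := by
        intro b
        rw [hF2def, Set.indicator_of_notMem]
        rintro ⟨h1, h2, h3⟩
        exact ha ⟨h1, lt_of_le_of_lt h2 h3⟩
      simp [this]
  have hf3slice : ∀ a : ℝ, (∫⁻ b, F3 (b, a))
      = (Set.Ioo (0:ℝ) 1).indicator
          (fun a => ∫⁻ b in Set.Ioc 0 a, HH k l (b / a)) a := by
    intro a
    by_cases ha : a ∈ Set.Ioo (0:ℝ) 1
    · rw [Set.indicator_of_mem ha, ← lintegral_indicator measurableSet_Ioc]
      congr 1
      funext b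
      by_cases hb : b ∈ Set.Ioc 0 a
      · rw [Set.indicator_of_mem hb, hF3def,
          Set.indicator_of_mem (by exact ⟨hb.1, hb.2, ha.2⟩)]
      · rw [Set.indicator_of_notMem hb, hF3def, Set.indicator_of_notMem]
        rintro ⟨h1, h2, -⟩
        exact hb ⟨h1, h2⟩
    · rw [Set.indicator_of_notMem ha]
      have : ∀ b, F3 (b, a) = 0 := by
        intro b
        rw [hF3def, Set.indicator_of_notMem]
        rintro ⟨h1, h2, h3⟩
        exact ha ⟨lt_of_lt_of_le h1 h2, h3⟩
      simp [this]
  -- A decomposition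
  have hA : HH (k+1) (l+1) 1 = 2⁻¹ * C1 + ∫⁻ a, ∫⁻ b, F2 (a, b) := by
    rw [stepA]
    have hsplit : ∀ a ∈ Set.Ioo (0:ℝ) 1,
        (∫⁻ b in Set.Ioo (0:ℝ) 1, HH k l (b / a))
          = ENNReal.ofReal a * C1 + ∫⁻ b, F2 (a, b) := by
      intro a ha
      rw [hf2slice a, Set.indicator_of_mem ha]
      rw [← Set.Ioo_union_Ico_eq_Ioo ha.1 ha.2.le,
        lintegral_union measurableSet_Ico
          (by
            rw [Set.disjoint_left]
            rintro x hx1 hx2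
            exact absurd hx2.1 (not_le.mpr hx1.2)),
        sub1 (HH k l) hK ha.1, hC1]
    calc ∫⁻ a in Set.Ioo (0:ℝ) 1, ∫⁻ b in Set.Ioo (0:ℝ) 1, HH k l (b / a)
        = ∫⁻ a in Set.Ioo (0:ℝ) 1,
            (ENNReal.ofReal a * C1 + ∫⁻ b, F2 (a, b)) := by
          refine setLIntegral_congr_fun measurableSet_Ioo ?_
          intro a ha
          exact hsplit a ha
      _ = (∫⁻ a in Set.Ioo (0:ℝ) 1, ENNReal.ofReal a * C1)
            + ∫⁻ a in Set.Ioo (0:ℝ) 1, ∫⁻ b, F2 (a, b) := by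
          rw [lintegral_add_left]
          exact (ENNReal.measurable_ofReal.comp measurable_id).mul_const _
      _ = 2⁻¹ * C1 + ∫⁻ a, ∫⁻ b, F2 (a, b) := by
          congr 1
          · rw [lintegral_mul_const _ ENNReal.measurable_ofReal, lint_half, mul_comm]
          · rw [← lintegral_indicator measurableSet_Ioo]
            congr 1
            funext a
            by_cases ha : a ∈ Set.Ioo (0:ℝ) 1
            · rw [Set.indicator_of_mem ha]
            · rw [Set.indicator_of_notMem ha, hf2slice a,
                Set.indicator_of_notMem ha]
  -- B decomposition
  have hB : HH (k+1) (l+1) 1 = 2⁻¹ * C2 + ∫⁻ b, ∫⁻ a, F3 (b, a) := by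
    rw [stepB]
    have hsplit : ∀ b ∈ Set.Ioo (0:ℝ) 1,
        (∫⁻ a in Set.Ioo (0:ℝ) 1, HH k l (b / a))
          = ENNReal.ofReal b * C2 + ∫⁻ a, F3 (b, a) := by
      intro b hb
      have hgm : Measurable (fun u : ℝ => HH k l u⁻¹) := hK.comp measurable_inv
      have hsub : (∫⁻ a in Set.Ioo 0 b, HH k l (b / a))
          = ENNReal.ofReal b * C2 := by
        have := sub1 (fun u => HH k l u⁻¹) hgm hb.1
        rw [← hC2]
        rw [← this]
        refine setLIntegral_congr_fun measurableSet_Ioo ?_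
        intro a ha
        beta_reduce
        rw [inv_div]
      have hslice2 : (∫⁻ a, F3 (b, a))
          = ∫⁻ a in Set.Ico b 1, HH k l (b / a) := by
        rw [← lintegral_indicator measurableSet_Ico]
        congr 1
        funext a
        by_cases ha : a ∈ Set.Ico b 1
        · rw [Set.indicator_of_mem ha, hF3def,
            Set.indicator_of_mem (by exact ⟨hb.1, ha.1, ha.2⟩)]
        · rw [Set.indicator_of_notMem ha, hF3def, Set.indicator_of_notMem]
          rintro ⟨-, h1, h2⟩
          exact ha ⟨h1, h2⟩
      rw [hslice2, ← hsub,
        ← lintegral_union measurableSet_Ico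
          (by
            rw [Set.disjoint_left]
            rintro x hx1 hx2
            exact absurd hx2.1 (not_le.mpr hx1.2)),
        Set.Ioo_union_Ico_eq_Ioo hb.1 hb.2.le]
    calc ∫⁻ b in Set.Ioo (0:ℝ) 1, ∫⁻ a in Set.Ioo (0:ℝ) 1, HH k l (b / a)
        = ∫⁻ b in Set.Ioo (0:ℝ) 1,
            (ENNReal.ofReal b * C2 + ∫⁻ a, F3 (b, a)) := by
          refine setLIntegral_congr_fun measurableSet_Ioo ?_
          intro b hb
          exact hsplit b hb
      _ = (∫⁻ b in Set.Ioo (0:ℝ) 1, ENNReal.ofReal b * C2)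
            + ∫⁻ b in Set.Ioo (0:ℝ) 1, ∫⁻ a, F3 (b, a) := by
          rw [lintegral_add_left]
          exact (ENNReal.measurable_ofReal.comp measurable_id).mul_const _
      _ = 2⁻¹ * C2 + ∫⁻ b, ∫⁻ a, F3 (b, a) := by
          congr 1
          · rw [lintegral_mul_const _ ENNReal.measurable_ofReal, lint_half, mul_comm]
          · have hvanish : ∀ b, b ∉ Set.Ioo (0:ℝ) 1 → (∫⁻ a, F3 (b, a)) = 0 := by
              intro b hb
              have : ∀ a, F3 (b, a) = 0 := by
                intro a
                rw [hF3def, Set.indicator_of_notMem]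
                rintro ⟨h1, h2, h3⟩
                exact hb ⟨h1, lt_of_le_of_lt h2 h3⟩
              simp [this]
            rw [← lintegral_indicator measurableSet_Ioo]
            congr 1
            funext b
            by_cases hb : b ∈ Set.Ioo (0:ℝ) 1
            · rw [Set.indicator_of_mem hb]
            · rw [Set.indicator_of_notMem hb, hvanish b hb]
  -- combine the two remainders
  have hcombine : (∫⁻ a, ∫⁻ b, F2 (a, b)) + (∫⁻ b, ∫⁻ a, F3 (b, a))
      = HH (k+1) (l+1) 1 := by
    have hswap : (∫⁻ b, ∫⁻ a, F3 (b, a)) = ∫⁻ a, ∫⁻ b, F3 (b, a) :=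
      lintegral_lintegral_swap (f := fun b a => F3 (b, a)) (by exact hF3.aemeasurable)
    rw [hswap, stepA]
    have hf2meas : Measurable fun a => ∫⁻ b, F2 (a, b) :=
      Measurable.lintegral_prod_right (f := fun a b => F2 (a, b)) (by exact hF2)
    rw [← lintegral_add_left hf2meas]
    rw [← lintegral_indicator measurableSet_Ioo]
    congr 1
    funext a
    by_cases ha : a ∈ Set.Ioo (0:ℝ) 1
    · rw [hf2slice a, hf3slice a, Set.indicator_of_mem ha, Set.indicator_of_mem ha,
        Set.indicator_of_mem ha]
      rw [show (∫⁻ b in Set.Ioc 0 a, HH k l (b / a))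
          = ∫⁻ b in Set.Ioo 0 a, HH k l (b / a) from
          (setLIntegral_congr Ioo_ae_eq_Ioc).symm]
      rw [add_comm, ← lintegral_union measurableSet_Ico
          (by
            rw [Set.disjoint_left]
            rintro x hx1 hx2
            exact absurd hx2.1 (not_le.mpr hx1.2)),
        Set.Ioo_union_Ico_eq_Ioo ha.1 ha.2.le]
    · rw [hf2slice a, hf3slice a, Set.indicator_of_notMem ha,
        Set.indicator_of_notMem ha, Set.indicator_of_notMem ha, add_zero]
  -- finish by cancellation
  have hfin : HH (k+1) (l+1) 1 ≠ ⊤ :=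
    ne_top_of_le_ne_top ENNReal.one_ne_top (HH_le_one _ _ _)
  have hdouble : HH (k+1) (l+1) 1 + HH (k+1) (l+1) 1
      = (2⁻¹ * C1 + 2⁻¹ * C2) + HH (k+1) (l+1) 1 := by
    calc HH (k+1) (l+1) 1 + HH (k+1) (l+1) 1
        = (2⁻¹ * C1 + ∫⁻ a, ∫⁻ b, F2 (a, b))
            + (2⁻¹ * C2 + ∫⁻ b, ∫⁻ a, F3 (b, a)) := by rw [← hA, ← hB]
      _ = (2⁻¹ * C1 + 2⁻¹ * C2)
            + ((∫⁻ a, ∫⁻ b, F2 (a, b)) + (∫⁻ b, ∫⁻ a, F3 (b, a))) := by ring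
      _ = (2⁻¹ * C1 + 2⁻¹ * C2) + HH (k+1) (l+1) 1 := by rw [hcombine]
  exact (WithTop.add_right_cancel hfin hdouble)

noncomputable def TT (m n : ℕ) : ℝ≥0∞ :=
  ∑ i ∈ Finset.range m, ((n + i - 1).choose i : ℝ≥0∞) * 2⁻¹ ^ (n + i)

lemma TT_zero (n : ℕ) : TT 0 n = 0 := by simp [TT]

lemma TT_base (M : ℕ) : TT (M+1) 0 = 1 := by
  rw [TT, Finset.sum_eq_single 0]
  · simp
  · intro i hi hne
    have : (0 + i - 1).choose i = 0 := Nat.choose_eq_zero_of_lt (by omega)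
    rw [this]; simp
  · intro h
    exact absurd (Finset.mem_range.mpr (Nat.succ_pos M)) h

lemma TT_pascal (M N : ℕ) :
    TT (M+1) (N+1) = 2⁻¹ * TT M (N+1) + 2⁻¹ * TT (M+1) N := by
  rw [TT, TT, TT, Finset.mul_sum, Finset.mul_sum]
  rw [Finset.sum_range_succ'
    (fun i => ((N + 1 + i - 1).choose i : ℝ≥0∞) * 2⁻¹ ^ (N + 1 + i)) M]
  rw [Finset.sum_range_succ'
    (fun i => 2⁻¹ * (((N + i - 1).choose i : ℝ≥0∞) * 2⁻¹ ^ (N + i))) M]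
  have h0 : ((N + 1 + 0 - 1).choose 0 : ℝ≥0∞) * 2⁻¹ ^ (N + 1 + 0) = 2⁻¹ ^ (N+1) := by
    simp
  have h0' : 2⁻¹ * (((N + 0 - 1).choose 0 : ℝ≥0∞) * 2⁻¹ ^ (N + 0)) = 2⁻¹ ^ (N+1) := by
    simp [pow_succ, mul_comm]
  rw [h0, h0']
  have hmain : (∑ i ∈ Finset.range M,
      ((N + 1 + (i+1) - 1).choose (i+1) : ℝ≥0∞) * 2⁻¹ ^ (N + 1 + (i+1)))
      = (∑ i ∈ Finset.range M, 2⁻¹ * (((N + 1 + i - 1).choose i : ℝ≥0∞) * 2⁻¹ ^ (N + 1 + i)))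
        + ∑ i ∈ Finset.range M, 2⁻¹ * (((N + (i+1) - 1).choose (i+1) : ℝ≥0∞) * 2⁻¹ ^ (N + (i+1))) := by
    rw [← Finset.sum_add_distrib]
    refine Finset.sum_congr rfl fun i _ => ?_
    have e1 : N + 1 + (i+1) - 1 = N + i + 1 := by omega
    have e2 : N + 1 + i - 1 = N + i := by omega
    have e3 : N + (i+1) - 1 = N + i := by omega
    have e4 : N + 1 + (i + 1) = (N + i + 1) + 1 := by omega
    have e5 : N + 1 + i = N + i + 1 := by omega
    have e6 : N + (i + 1) = N + i + 1 := by omega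
    rw [e1, e2, e3, e4, e5, e6, Nat.choose_succ_succ]
    push_cast
    ring
  rw [hmain]
  ring

theorem HH_eq_TT (m n : ℕ) : HH m n 1 = TT m n := by
  induction m generalizing n with
  | zero => rw [HH_zero_left, TT_zero]
  | succ M ih =>
    induction n with
    | zero => rw [HH_zero_right _ (Nat.succ_pos M), TT_base]
    | succ Nn ih2 => rw [recurrence, ih (Nn+1), ih2, TT_pascal]

/-- for positive integers `m, n`, the Lebesgue measure of
`{(x,y) ∈ [0,1]ᵐ × [0,1]ⁿ : x₁⋯xₘ < y₁⋯yₙ}` equals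
`Σ_{i=0}^{m−1} C(n+i−1, i) · 2^{−(n+i)}`. -/
theorem stmt15 (m n : ℕ) (hm : 0 < m) (hn : 0 < n) :
    (volume {z : (Fin m → ℝ) × (Fin n → ℝ) |
        (∀ i, z.1 i ∈ Set.Icc (0 : ℝ) 1) ∧ (∀ j, z.2 j ∈ Set.Icc (0 : ℝ) 1) ∧
        ∏ i, z.1 i < ∏ j, z.2 j}).toReal
      = ∑ i ∈ Finset.range m, ((n + i - 1).choose i : ℝ) / 2 ^ (n + i) := by
  have hset : {z : (Fin m → ℝ) × (Fin n → ℝ) |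
        (∀ i, z.1 i ∈ Set.Icc (0 : ℝ) 1) ∧ (∀ j, z.2 j ∈ Set.Icc (0 : ℝ) 1) ∧
        ∏ i, z.1 i < ∏ j, z.2 j}
      = {z : (Fin m → ℝ) × (Fin n → ℝ) |
        (∀ i, z.1 i ∈ Set.Icc (0 : ℝ) 1) ∧ (∀ j, z.2 j ∈ Set.Icc (0 : ℝ) 1) ∧
        ∏ i, z.1 i < 1 * ∏ j, z.2 j} := by
    simp only [one_mul]
  rw [hset, show volume {z : (Fin m → ℝ) × (Fin n → ℝ) |
        (∀ i, z.1 i ∈ Set.Icc (0 : ℝ) 1) ∧ (∀ j, z.2 j ∈ Set.Icc (0 : ℝ) 1) ∧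
        ∏ i, z.1 i < 1 * ∏ j, z.2 j} = HH m n 1 from rfl, HH_eq_TT, TT]
  rw [ENNReal.toReal_sum (fun i _ => ?_)]
  · refine Finset.sum_congr rfl fun i _ => ?_
    rw [ENNReal.toReal_mul, ENNReal.toReal_pow, ENNReal.toReal_inv]
    simp only [ENNReal.toReal_natCast, ENNReal.toReal_ofNat]
    rw [inv_pow, div_eq_mul_inv]
  · exact ENNReal.mul_ne_top (ENNReal.natCast_ne_top _)
      (ENNReal.pow_ne_top (by simp))
end

section
/- The relation of 'matching' (that is, f(P;Q) = 1/2) is not transitive: f(60; 20,30) = 1/2, f(60; 15,36) = 1/2, and f(60; 12,40) = 1/2, yet f(20,30; 15,36) = 270/539 ≠ 1/2. -/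
open MeasureTheory Finset

section Aux
open Set

lemma slice1 (a c : ℝ) (ha : 0 < a) (hc : 0 ≤ c) :
    volume {x : ℝ | x ∈ Set.Icc (0:ℝ) 1 ∧ x ^ a < c} =
      ENNReal.ofReal (min (c ^ a⁻¹) 1) := by
  rcases eq_or_lt_of_le hc with h0 | hc
  · have : {x : ℝ | x ∈ Set.Icc (0:ℝ) 1 ∧ x ^ a < c} = ∅ := by
      ext x; simp only [Set.mem_setOf_eq, Set.mem_empty_iff_false, iff_false]
      rintro ⟨hx, hlt⟩
      exact absurd hlt (not_lt.2 (h0 ▸ Real.rpow_nonneg hx.1 a))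
    rw [this, ← h0, Real.zero_rpow (inv_ne_zero ha.ne'), measure_empty]
    simp
  rcases le_or_gt c 1 with hc1 | hc1
  · have hle : c ^ a⁻¹ ≤ 1 := Real.rpow_le_one hc.le hc1 (by positivity)
    have : {x : ℝ | x ∈ Set.Icc (0:ℝ) 1 ∧ x ^ a < c} = Set.Ico 0 (c ^ a⁻¹) := by
      ext x
      simp only [Set.mem_setOf_eq, Set.mem_Icc, Set.mem_Ico]
      constructor
      · rintro ⟨⟨hx0, _⟩, hlt⟩
        exact ⟨hx0, (Real.lt_rpow_inv_iff_of_pos hx0 hc.le ha).2 hlt⟩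
      · rintro ⟨hx0, hlt⟩
        exact ⟨⟨hx0, le_trans hlt.le hle⟩,
          (Real.lt_rpow_inv_iff_of_pos hx0 hc.le ha).1 hlt⟩
    rw [this, Real.volume_Ico, min_eq_left hle, sub_zero]
  · have hge : 1 ≤ c ^ a⁻¹ := Real.one_le_rpow hc1.le (by positivity)
    have : {x : ℝ | x ∈ Set.Icc (0:ℝ) 1 ∧ x ^ a < c} = Set.Icc 0 1 := by
      ext x
      simp only [Set.mem_setOf_eq, Set.mem_Icc, and_iff_left_iff_imp]
      rintro ⟨hx0, hx1⟩
      exact lt_of_le_of_lt (Real.rpow_le_one hx0 hx1 ha.le) hc1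
    rw [this, Real.volume_Icc, min_eq_right hge, sub_zero]

lemma lint_rpow (r t u : ℝ) (hr : -1 < r) (ht : 0 ≤ t) (htu : t ≤ u) :
    ∫⁻ x in Set.Ioc t u, ENNReal.ofReal (x ^ r) =
      ENNReal.ofReal ((u ^ (r + 1) - t ^ (r + 1)) / (r + 1)) := by
  rw [← ofReal_integral_eq_lintegral_ofReal]
  · rw [← intervalIntegral.integral_of_le htu, integral_rpow (Or.inl hr)]
  · exact (intervalIntegral.intervalIntegrable_rpow' (a := t) (b := u) hr).1
  · filter_upwards [ae_restrict_mem measurableSet_Ioc] with x hx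
    exact Real.rpow_nonneg (le_trans ht hx.1.le) r

lemma slice2 (c : ℝ) (hc0 : 0 ≤ c) (hc1 : c ≤ 1) :
    volume {p : ℝ × ℝ | (p.1 ∈ Set.Icc (0:ℝ) 1 ∧ p.2 ∈ Set.Icc (0:ℝ) 1) ∧
        p.1 ^ (20:ℝ) * p.2 ^ (30:ℝ) < c} =
      ENNReal.ofReal (3 * c ^ (30:ℝ)⁻¹ - 2 * c ^ (20:ℝ)⁻¹) := by
  have hA : Measurable fun p : ℝ × ℝ => p.1 ^ (20:ℝ) * p.2 ^ (30:ℝ) := by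
    measurability
  have hS : MeasurableSet {p : ℝ × ℝ | (p.1 ∈ Set.Icc (0:ℝ) 1 ∧ p.2 ∈ Set.Icc (0:ℝ) 1) ∧
      p.1 ^ (20:ℝ) * p.2 ^ (30:ℝ) < c} :=
    (((measurableSet_Icc.preimage measurable_fst).inter
      (measurableSet_Icc.preimage measurable_snd)).inter
      (measurableSet_lt hA measurable_const))
  rw [MeasureTheory.Measure.volume_eq_prod, MeasureTheory.Measure.prod_apply hS]
  set t := c ^ (20:ℝ)⁻¹ with ht
  have ht0 : 0 ≤ t := Real.rpow_nonneg hc0 _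
  have ht1 : t ≤ 1 := Real.rpow_le_one hc0 hc1 (by norm_num)
  have htc : t ^ (20:ℝ) = c := by
    rw [ht, ← Real.rpow_mul hc0]; norm_num
  have hne : ∀ᵐ x : ℝ, x ≠ 0 := by
    rw [ae_iff]
    convert Real.volume_singleton (a := 0) using 2
    ext x; simp
  have key : (fun x : ℝ => volume (Prod.mk x ⁻¹'
        {p : ℝ × ℝ | (p.1 ∈ Set.Icc (0:ℝ) 1 ∧ p.2 ∈ Set.Icc (0:ℝ) 1) ∧
          p.1 ^ (20:ℝ) * p.2 ^ (30:ℝ) < c})) =ᵐ[volume]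
      (Set.Ioc (0:ℝ) 1).indicator
        (fun x => ENNReal.ofReal (min ((c / x ^ (20:ℝ)) ^ (30:ℝ)⁻¹) 1)) := by
    filter_upwards [hne] with x hx
    by_cases hxI : x ∈ Set.Ioc (0:ℝ) 1
    · rw [Set.indicator_of_mem hxI]
      have hx20 : (0:ℝ) < x ^ (20:ℝ) := Real.rpow_pos_of_pos hxI.1 _
      have hset : Prod.mk x ⁻¹'
          {p : ℝ × ℝ | (p.1 ∈ Set.Icc (0:ℝ) 1 ∧ p.2 ∈ Set.Icc (0:ℝ) 1) ∧
            p.1 ^ (20:ℝ) * p.2 ^ (30:ℝ) < c} =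
          {y : ℝ | y ∈ Set.Icc (0:ℝ) 1 ∧ y ^ (30:ℝ) < c / x ^ (20:ℝ)} := by
        ext y
        simp only [Set.mem_preimage, Set.mem_setOf_eq, Set.mem_Icc]
        rw [lt_div_iff₀' hx20]
        have : x ∈ Set.Icc (0:ℝ) 1 := ⟨hxI.1.le, hxI.2⟩
        constructor
        · rintro ⟨⟨-, hy⟩, hlt⟩
          exact ⟨⟨hy.1, hy.2⟩, hlt⟩
        · rintro ⟨hy, hlt⟩
          exact ⟨⟨this, hy⟩, hlt⟩
      rw [hset, slice1 30 _ (by norm_num) (by positivity)]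
    · rw [Set.indicator_of_notMem hxI]
      have hset : Prod.mk x ⁻¹'
          {p : ℝ × ℝ | (p.1 ∈ Set.Icc (0:ℝ) 1 ∧ p.2 ∈ Set.Icc (0:ℝ) 1) ∧
            p.1 ^ (20:ℝ) * p.2 ^ (30:ℝ) < c} = ∅ := by
        ext y
        simp only [Set.mem_preimage, Set.mem_setOf_eq, Set.mem_empty_iff_false, iff_false]
        rintro ⟨⟨hxIcc, -⟩, -⟩
        rcases eq_or_lt_of_le hxIcc.1 with h | h
        · exact hx h.symm
        · exact hxI ⟨h, hxIcc.2⟩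
      rw [hset, measure_empty]
  rw [lintegral_congr_ae key, lintegral_indicator measurableSet_Ioc _,
    ← Set.Ioc_union_Ioc_eq_Ioc ht0 ht1,
    lintegral_union measurableSet_Ioc (Set.Ioc_disjoint_Ioc_of_le le_rfl)]
  have h1 : ∫⁻ x in Set.Ioc 0 t,
      ENNReal.ofReal (min ((c / x ^ (20:ℝ)) ^ (30:ℝ)⁻¹) 1) = ENNReal.ofReal t := by
    rw [setLIntegral_congr_fun_ae measurableSet_Ioc
      (ae_of_all _ (fun x hx => ?_)), setLIntegral_one, Real.volume_Ioc, sub_zero]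
    have hx20 : (0:ℝ) < x ^ (20:ℝ) := Real.rpow_pos_of_pos hx.1 _
    have hxc : x ^ (20:ℝ) ≤ c := htc ▸ Real.rpow_le_rpow hx.1.le hx.2 (by norm_num)
    have : (1:ℝ) ≤ (c / x ^ (20:ℝ)) ^ (30:ℝ)⁻¹ :=
      Real.one_le_rpow ((one_le_div hx20).2 hxc) (by norm_num)
    rw [min_eq_right this, ENNReal.ofReal_one]
  have h2 : ∫⁻ x in Set.Ioc t 1,
      ENNReal.ofReal (min ((c / x ^ (20:ℝ)) ^ (30:ℝ)⁻¹) 1) =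
      ENNReal.ofReal (c ^ (30:ℝ)⁻¹) *
        ENNReal.ofReal ((1 - t ^ (-(2:ℝ)/3 + 1)) / (-(2:ℝ)/3 + 1)) := by
    rw [setLIntegral_congr_fun_ae measurableSet_Ioc
      (ae_of_all _ (fun x hx => ?_))]
    · rw [lintegral_const_mul' _ _ ENNReal.ofReal_ne_top,
        lint_rpow (-(2:ℝ)/3) t 1 (by norm_num) ht0 ht1, Real.one_rpow]
    · have hx0 : (0:ℝ) < x := lt_of_le_of_lt ht0 hx.1
      have hx20 : (0:ℝ) < x ^ (20:ℝ) := Real.rpow_pos_of_pos hx0 _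
      have hcx : c ≤ x ^ (20:ℝ) := htc ▸ Real.rpow_le_rpow ht0 hx.1.le (by norm_num)
      have hmin : (c / x ^ (20:ℝ)) ^ (30:ℝ)⁻¹ ≤ 1 :=
        Real.rpow_le_one (by positivity) ((div_le_one hx20).2 hcx) (by norm_num)
      rw [min_eq_left hmin, Real.div_rpow hc0 hx20.le, ← Real.rpow_mul hx0.le,
        div_eq_mul_inv, ← Real.rpow_neg hx0.le, ENNReal.ofReal_mul (by positivity)]
      norm_num
  have h3 : (0:ℝ) ≤ (1 - t ^ (-(2:ℝ)/3 + 1)) / (-(2:ℝ)/3 + 1) := by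
    apply div_nonneg _ (by norm_num)
    linarith [Real.rpow_le_one ht0 ht1 (show (0:ℝ) ≤ -(2:ℝ)/3 + 1 by norm_num)]
  rw [h1, h2, ← ENNReal.ofReal_mul (by positivity),
    ← ENNReal.ofReal_add ht0 (mul_nonneg (Real.rpow_nonneg hc0 _) h3)]
  congr 1
  have h60 : t ^ (-(2:ℝ)/3 + 1) = c ^ (60:ℝ)⁻¹ := by
    rw [ht, ← Real.rpow_mul hc0]; norm_num
  have hmul : c ^ (30:ℝ)⁻¹ * c ^ (60:ℝ)⁻¹ = c ^ (20:ℝ)⁻¹ := by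
    rw [← Real.rpow_add' hc0 (by norm_num)]; norm_num
  rw [h60]
  have : -(2:ℝ)/3 + 1 = 3⁻¹ := by norm_num
  rw [this]
  field_simp
  nlinarith [hmul]

lemma lint_rpow01 (r : ℝ) (hr : 0 < r) :
    ∫⁻ x in Set.Icc (0:ℝ) 1, ENNReal.ofReal (x ^ r) = ENNReal.ofReal (1 / (r + 1)) := by
  rw [← Measure.restrict_congr_set MeasureTheory.Ioc_ae_eq_Icc,
    lint_rpow r 0 1 (by linarith) le_rfl zero_le_one, Real.one_rpow,
    Real.zero_rpow (by positivity), sub_zero]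

lemma hv12 (a b1 b2 : ℝ) (ha : 0 < a) (hb1 : 0 < b1) (hb2 : 0 < b2) :
    hypervolume 1 2 ![a] ![b1, b2] = (a / (a + b1)) * (a / (a + b2)) := by
  have hA : Measurable fun q : ℝ × (ℝ × ℝ) => q.1 ^ a :=
    (Real.continuous_rpow_const ha.le).measurable.comp measurable_fst
  have hB : Measurable fun q : ℝ × (ℝ × ℝ) => q.2.1 ^ b1 * q.2.2 ^ b2 :=
    (((Real.continuous_rpow_const hb1.le).measurable.comp
      (measurable_fst.comp measurable_snd)).mul
      ((Real.continuous_rpow_const hb2.le).measurable.comp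
      (measurable_snd.comp measurable_snd)))
  set S' : Set (ℝ × (ℝ × ℝ)) := {q | q.1 ∈ Set.Icc (0:ℝ) 1 ∧
      (q.2.1 ∈ Set.Icc (0:ℝ) 1 ∧ q.2.2 ∈ Set.Icc (0:ℝ) 1) ∧
      q.1 ^ a < q.2.1 ^ b1 * q.2.2 ^ b2} with hS'def
  have hS' : MeasurableSet S' :=
    ((measurableSet_Icc.preimage measurable_fst).inter
      (((measurableSet_Icc.preimage (measurable_fst.comp measurable_snd)).inter
        (measurableSet_Icc.preimage (measurable_snd.comp measurable_snd))).inter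
        (measurableSet_lt hA hB))).congr (by ext q; simp [hS'def]; tauto)
  have hG : MeasurePreserving
      (Prod.map (MeasurableEquiv.funUnique (Fin 1) ℝ)
        (MeasurableEquiv.piFinTwo fun _ => ℝ)) volume volume :=
    (volume_preserving_funUnique (Fin 1) ℝ).prod (volume_preserving_piFinTwo fun _ => ℝ)
  have hpre : {z : (Fin 1 → ℝ) × (Fin 2 → ℝ) |
      (∀ i, z.1 i ∈ Set.Icc (0 : ℝ) 1) ∧ (∀ j, z.2 j ∈ Set.Icc (0 : ℝ) 1) ∧
      ∏ i, (z.1 i) ^ (![a] i) < ∏ j, (z.2 j) ^ (![b1, b2] j)} =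
      (Prod.map (MeasurableEquiv.funUnique (Fin 1) ℝ)
        (MeasurableEquiv.piFinTwo fun _ => ℝ)) ⁻¹' S' := by
    ext z
    simp [hS'def, MeasurableEquiv.funUnique, MeasurableEquiv.piFinTwo_apply,
      Fin.forall_fin_one, Fin.forall_fin_two, Fin.prod_univ_one, Fin.prod_univ_two]
  rw [hypervolume, hpre, hG.measure_preimage hS'.nullMeasurableSet]
  have hvol : volume S' = ENNReal.ofReal ((a / (a + b1)) * (a / (a + b2))) := by
    rw [Measure.volume_eq_prod, Measure.prod_apply_symm hS']
    have hfun : (fun y : ℝ × ℝ => volume ((fun x => (x, y)) ⁻¹' S')) =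
        (Set.Icc (0:ℝ) 1 ×ˢ Set.Icc (0:ℝ) 1).indicator
          (fun y => ENNReal.ofReal (y.1 ^ (b1 * a⁻¹) * y.2 ^ (b2 * a⁻¹))) := by
      funext y
      by_cases hy : y ∈ Set.Icc (0:ℝ) 1 ×ˢ Set.Icc (0:ℝ) 1
      · obtain ⟨hy1, hy2⟩ := Set.mem_prod.1 hy
        rw [Set.indicator_of_mem hy]
        have hc0 : (0:ℝ) ≤ y.1 ^ b1 * y.2 ^ b2 :=
          mul_nonneg (Real.rpow_nonneg hy1.1 _) (Real.rpow_nonneg hy2.1 _)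
        have hc1 : y.1 ^ b1 * y.2 ^ b2 ≤ 1 := by
          have := Real.rpow_le_one hy1.1 hy1.2 hb1.le
          have := Real.rpow_le_one hy2.1 hy2.2 hb2.le
          nlinarith [Real.rpow_nonneg hy1.1 b1]
        have hset : (fun x => (x, y)) ⁻¹' S' =
            {x : ℝ | x ∈ Set.Icc (0:ℝ) 1 ∧ x ^ a < y.1 ^ b1 * y.2 ^ b2} := by
          ext x
          simp only [hS'def, Set.mem_preimage, Set.mem_setOf_eq]
          tauto
        rw [hset, slice1 a _ ha hc0,
          min_eq_left (Real.rpow_le_one hc0 hc1 (by positivity)),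
          Real.mul_rpow (Real.rpow_nonneg hy1.1 _) (Real.rpow_nonneg hy2.1 _),
          ← Real.rpow_mul hy1.1, ← Real.rpow_mul hy2.1]
      · rw [Set.indicator_of_notMem hy]
        have hset : (fun x => (x, y)) ⁻¹' S' = ∅ := by
          ext x
          simp only [hS'def, Set.mem_preimage, Set.mem_setOf_eq,
            Set.mem_empty_iff_false, iff_false]
          rintro ⟨-, hy', -⟩
          exact hy ⟨hy'.1, hy'.2⟩
        rw [hset, measure_empty]
    rw [hfun, lintegral_indicator (measurableSet_Icc.prod measurableSet_Icc),
      setLIntegral_congr_fun_ae (measurableSet_Icc.prod measurableSet_Icc)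
        (ae_of_all _ (fun y hy => by
          rw [ENNReal.ofReal_mul (Real.rpow_nonneg hy.1.1 _)])),
      Measure.volume_eq_prod, ← Measure.prod_restrict,
      lintegral_prod_mul
        ((Real.continuous_rpow_const (by positivity : (0:ℝ) ≤ b1 * a⁻¹)).measurable.ennreal_ofReal.aemeasurable)
        ((Real.continuous_rpow_const (by positivity : (0:ℝ) ≤ b2 * a⁻¹)).measurable.ennreal_ofReal.aemeasurable)]
    rw [lint_rpow01 _ (by positivity), lint_rpow01 _ (by positivity),
      ← ENNReal.ofReal_mul (by positivity)]
    congr 1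
    rw [div_mul_div_comm, one_mul]
    field_simp
    ring
  rw [hvol, ENNReal.toReal_ofReal (by positivity)]

lemma int_rpow01 (r : ℝ) (hr : 0 < r) :
    ∫ x in Set.Icc (0:ℝ) 1, x ^ r = 1 / (r + 1) := by
  rw [← setIntegral_congr_set MeasureTheory.Ioc_ae_eq_Icc,
    ← intervalIntegral.integral_of_le zero_le_one, integral_rpow (Or.inl (by linarith)),
    Real.one_rpow, Real.zero_rpow (by positivity), sub_zero]

lemma gnn (c : ℝ) (hc0 : 0 ≤ c) (hc1 : c ≤ 1) :
    0 ≤ 3 * c ^ (30:ℝ)⁻¹ - 2 * c ^ (20:ℝ)⁻¹ := by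
  rcases eq_or_lt_of_le hc0 with h | h
  · rw [← h, Real.zero_rpow (by norm_num), Real.zero_rpow (by norm_num)]; norm_num
  · have h1 : c ^ (20:ℝ)⁻¹ ≤ c ^ (30:ℝ)⁻¹ :=
      Real.rpow_le_rpow_of_exponent_ge h hc1 (by norm_num)
    have h2 : 0 ≤ c ^ (20:ℝ)⁻¹ := Real.rpow_nonneg hc0 _
    linarith

lemma hv22 : hypervolume 2 2 ![20, 30] ![15, 36] = 270 / 539 := by
  have hcont : ∀ r : ℝ, 0 ≤ r → Continuous fun x : ℝ => x ^ r := fun r hr =>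
    Real.continuous_rpow_const hr
  have hA : Measurable fun q : (ℝ × ℝ) × (ℝ × ℝ) => q.1.1 ^ (20:ℝ) * q.1.2 ^ (30:ℝ) :=
    (((hcont 20 (by norm_num)).measurable.comp (measurable_fst.comp measurable_fst)).mul
      ((hcont 30 (by norm_num)).measurable.comp (measurable_snd.comp measurable_fst)))
  have hB : Measurable fun q : (ℝ × ℝ) × (ℝ × ℝ) => q.2.1 ^ (15:ℝ) * q.2.2 ^ (36:ℝ) :=
    (((hcont 15 (by norm_num)).measurable.comp (measurable_fst.comp measurable_snd)).mul
      ((hcont 36 (by norm_num)).measurable.comp (measurable_snd.comp measurable_snd)))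
  set S' : Set ((ℝ × ℝ) × (ℝ × ℝ)) := {q | (q.1.1 ∈ Set.Icc (0:ℝ) 1 ∧ q.1.2 ∈ Set.Icc (0:ℝ) 1) ∧
      (q.2.1 ∈ Set.Icc (0:ℝ) 1 ∧ q.2.2 ∈ Set.Icc (0:ℝ) 1) ∧
      q.1.1 ^ (20:ℝ) * q.1.2 ^ (30:ℝ) < q.2.1 ^ (15:ℝ) * q.2.2 ^ (36:ℝ)} with hS'def
  have hS' : MeasurableSet S' := by
    apply MeasurableSet.inter
    · exact ((measurableSet_Icc.preimage (measurable_fst.comp measurable_fst)).inter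
        (measurableSet_Icc.preimage (measurable_snd.comp measurable_fst)))
    apply MeasurableSet.inter
    · exact ((measurableSet_Icc.preimage (measurable_fst.comp measurable_snd)).inter
        (measurableSet_Icc.preimage (measurable_snd.comp measurable_snd)))
    · exact measurableSet_lt hA hB
  have hG : MeasurePreserving
      (Prod.map (MeasurableEquiv.piFinTwo fun _ => ℝ)
        (MeasurableEquiv.piFinTwo fun _ => ℝ)) volume volume :=
    (volume_preserving_piFinTwo fun _ => ℝ).prod (volume_preserving_piFinTwo fun _ => ℝ)
  have hpre : {z : (Fin 2 → ℝ) × (Fin 2 → ℝ) |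
      (∀ i, z.1 i ∈ Set.Icc (0 : ℝ) 1) ∧ (∀ j, z.2 j ∈ Set.Icc (0 : ℝ) 1) ∧
      ∏ i, (z.1 i) ^ (![(20:ℝ), 30] i) < ∏ j, (z.2 j) ^ (![(15:ℝ), 36] j)} =
      (Prod.map (MeasurableEquiv.piFinTwo fun _ => ℝ)
        (MeasurableEquiv.piFinTwo fun _ => ℝ)) ⁻¹' S' := by
    ext z
    simp [hS'def, MeasurableEquiv.piFinTwo_apply, Fin.forall_fin_two, Fin.prod_univ_two]
  have hsq : MeasurableSet (Set.Icc (0:ℝ) 1 ×ˢ Set.Icc (0:ℝ) 1) :=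
    measurableSet_Icc.prod measurableSet_Icc
  have hvol : volume S' = ENNReal.ofReal (270 / 539) := by
    rw [Measure.volume_eq_prod, Measure.prod_apply_symm hS']
    have hfun : (fun y : ℝ × ℝ => volume ((fun x => (x, y)) ⁻¹' S')) =
        (Set.Icc (0:ℝ) 1 ×ˢ Set.Icc (0:ℝ) 1).indicator
          (fun y => ENNReal.ofReal (3 * (y.1 ^ (15:ℝ) * y.2 ^ (36:ℝ)) ^ (30:ℝ)⁻¹ -
            2 * (y.1 ^ (15:ℝ) * y.2 ^ (36:ℝ)) ^ (20:ℝ)⁻¹)) := by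
      funext y
      by_cases hy : y ∈ Set.Icc (0:ℝ) 1 ×ˢ Set.Icc (0:ℝ) 1
      · obtain ⟨hy1, hy2⟩ := Set.mem_prod.1 hy
        rw [Set.indicator_of_mem hy]
        have hc0 : (0:ℝ) ≤ y.1 ^ (15:ℝ) * y.2 ^ (36:ℝ) :=
          mul_nonneg (Real.rpow_nonneg hy1.1 _) (Real.rpow_nonneg hy2.1 _)
        have hc1 : y.1 ^ (15:ℝ) * y.2 ^ (36:ℝ) ≤ 1 := by
          have u1 := Real.rpow_le_one hy1.1 hy1.2 (by norm_num : (0:ℝ) ≤ 15)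
          have u2 := Real.rpow_le_one hy2.1 hy2.2 (by norm_num : (0:ℝ) ≤ 36)
          nlinarith [Real.rpow_nonneg hy1.1 (15:ℝ)]
        have hset : (fun x : ℝ × ℝ => (x, y)) ⁻¹' S' =
            {p : ℝ × ℝ | (p.1 ∈ Set.Icc (0:ℝ) 1 ∧ p.2 ∈ Set.Icc (0:ℝ) 1) ∧
              p.1 ^ (20:ℝ) * p.2 ^ (30:ℝ) < y.1 ^ (15:ℝ) * y.2 ^ (36:ℝ)} := by
          ext p
          simp only [hS'def, Set.mem_preimage, Set.mem_setOf_eq]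
          tauto
        rw [hset, slice2 _ hc0 hc1]
      · rw [Set.indicator_of_notMem hy]
        have hset : (fun x : ℝ × ℝ => (x, y)) ⁻¹' S' = ∅ := by
          ext p
          simp only [hS'def, Set.mem_preimage, Set.mem_setOf_eq,
            Set.mem_empty_iff_false, iff_false]
          rintro ⟨-, hy', -⟩
          exact hy ⟨hy'.1, hy'.2⟩
        rw [hset, measure_empty]
    rw [hfun, lintegral_indicator hsq]
    have hcontc : Continuous fun y : ℝ × ℝ =>
        3 * (y.1 ^ (15:ℝ) * y.2 ^ (36:ℝ)) ^ (30:ℝ)⁻¹ -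
          2 * (y.1 ^ (15:ℝ) * y.2 ^ (36:ℝ)) ^ (20:ℝ)⁻¹ := by
      have hc : Continuous fun y : ℝ × ℝ => y.1 ^ (15:ℝ) * y.2 ^ (36:ℝ) :=
        ((hcont 15 (by norm_num)).comp continuous_fst).mul
          ((hcont 36 (by norm_num)).comp continuous_snd)
      exact (continuous_const.mul ((hcont _ (by norm_num)).comp hc)).sub
        (continuous_const.mul ((hcont _ (by norm_num)).comp hc))
    have hint : Integrable (fun y : ℝ × ℝ =>
        3 * (y.1 ^ (15:ℝ) * y.2 ^ (36:ℝ)) ^ (30:ℝ)⁻¹ -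
          2 * (y.1 ^ (15:ℝ) * y.2 ^ (36:ℝ)) ^ (20:ℝ)⁻¹)
        (volume.restrict (Set.Icc (0:ℝ) 1 ×ˢ Set.Icc (0:ℝ) 1)) :=
      ContinuousOn.integrableOn_compact (isCompact_Icc.prod isCompact_Icc)
        hcontc.continuousOn
    have hnn : 0 ≤ᵐ[volume.restrict (Set.Icc (0:ℝ) 1 ×ˢ Set.Icc (0:ℝ) 1)]
        (fun y : ℝ × ℝ =>
        3 * (y.1 ^ (15:ℝ) * y.2 ^ (36:ℝ)) ^ (30:ℝ)⁻¹ -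
          2 * (y.1 ^ (15:ℝ) * y.2 ^ (36:ℝ)) ^ (20:ℝ)⁻¹) := by
      filter_upwards [ae_restrict_mem hsq] with y hy
      obtain ⟨hy1, hy2⟩ := Set.mem_prod.1 hy
      have hc0 : (0:ℝ) ≤ y.1 ^ (15:ℝ) * y.2 ^ (36:ℝ) :=
        mul_nonneg (Real.rpow_nonneg hy1.1 _) (Real.rpow_nonneg hy2.1 _)
      have hc1 : y.1 ^ (15:ℝ) * y.2 ^ (36:ℝ) ≤ 1 := by
        have u1 := Real.rpow_le_one hy1.1 hy1.2 (by norm_num : (0:ℝ) ≤ 15)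
        have u2 := Real.rpow_le_one hy2.1 hy2.2 (by norm_num : (0:ℝ) ≤ 36)
        nlinarith [Real.rpow_nonneg hy1.1 (15:ℝ)]
      exact gnn _ hc0 hc1
    rw [← ofReal_integral_eq_lintegral_ofReal hint hnn]
    congr 1
    rw [setIntegral_congr_fun hsq (g := fun y : ℝ × ℝ =>
        3 * (y.1 ^ ((1:ℝ)/2) * y.2 ^ ((6:ℝ)/5)) - 2 * (y.1 ^ ((3:ℝ)/4) * y.2 ^ ((9:ℝ)/5)))
      (fun y hy => by
        obtain ⟨hy1, hy2⟩ := Set.mem_prod.1 hy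
        rw [Real.mul_rpow (Real.rpow_nonneg hy1.1 _) (Real.rpow_nonneg hy2.1 _),
          Real.mul_rpow (Real.rpow_nonneg hy1.1 _) (Real.rpow_nonneg hy2.1 _),
          ← Real.rpow_mul hy1.1, ← Real.rpow_mul hy2.1,
          ← Real.rpow_mul hy1.1, ← Real.rpow_mul hy2.1]
        norm_num)]
    have hi1 : Integrable (fun y : ℝ × ℝ => 3 * (y.1 ^ ((1:ℝ)/2) * y.2 ^ ((6:ℝ)/5)))
        (volume.restrict (Set.Icc (0:ℝ) 1 ×ˢ Set.Icc (0:ℝ) 1)) :=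
      ContinuousOn.integrableOn_compact (isCompact_Icc.prod isCompact_Icc)
        (continuous_const.mul (((hcont _ (by norm_num)).comp continuous_fst).mul
          ((hcont _ (by norm_num)).comp continuous_snd))).continuousOn
    have hi2 : Integrable (fun y : ℝ × ℝ => 2 * (y.1 ^ ((3:ℝ)/4) * y.2 ^ ((9:ℝ)/5)))
        (volume.restrict (Set.Icc (0:ℝ) 1 ×ˢ Set.Icc (0:ℝ) 1)) :=
      ContinuousOn.integrableOn_compact (isCompact_Icc.prod isCompact_Icc)
        (continuous_const.mul (((hcont _ (by norm_num)).comp continuous_fst).mul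
          ((hcont _ (by norm_num)).comp continuous_snd))).continuousOn
    rw [integral_sub hi1 hi2, integral_const_mul, integral_const_mul,
      Measure.volume_eq_prod,
      setIntegral_prod_mul (fun x : ℝ => x ^ ((1:ℝ)/2)) (fun y : ℝ => y ^ ((6:ℝ)/5))
        (Set.Icc 0 1) (Set.Icc 0 1),
      setIntegral_prod_mul (fun x : ℝ => x ^ ((3:ℝ)/4)) (fun y : ℝ => y ^ ((9:ℝ)/5))
        (Set.Icc 0 1) (Set.Icc 0 1),
      int_rpow01 _ (by norm_num), int_rpow01 _ (by norm_num),
      int_rpow01 _ (by norm_num), int_rpow01 _ (by norm_num)]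
    norm_num
  rw [hypervolume, hpre, hG.measure_preimage hS'.nullMeasurableSet, hvol,
    ENNReal.toReal_ofReal (by norm_num)]

end Aux

/-- 'matching' (`f(P;Q) = 1/2`) is not transitive:
`f(60; 20,30) = f(60; 15,36) = f(60; 12,40) = 1/2`, yet
`f(20,30; 15,36) = 270/539 ≠ 1/2`. -/
theorem stmt18 :
    hypervolume 1 2 ![60] ![20, 30] = 1 / 2 ∧
    hypervolume 1 2 ![60] ![15, 36] = 1 / 2 ∧
    hypervolume 1 2 ![60] ![12, 40] = 1 / 2 ∧
    hypervolume 2 2 ![20, 30] ![15, 36] = 270 / 539 ∧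
    hypervolume 2 2 ![20, 30] ![15, 36] ≠ 1 / 2 := by
  refine ⟨?_, ?_, ?_, hv22, ?_⟩
  · rw [hv12 60 20 30 (by norm_num) (by norm_num) (by norm_num)]; norm_num
  · rw [hv12 60 15 36 (by norm_num) (by norm_num) (by norm_num)]; norm_num
  · rw [hv12 60 12 40 (by norm_num) (by norm_num) (by norm_num)]; norm_num
  · rw [hv22]; norm_num
end
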